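/- arXiv:1810.04004 — 3 statements merged into one kernel-verified Lean document; each statement's English description precedes it below -/
import Mathlib

section
/- For every integer n ≥ 1, the strong geodetic number of the hypercube Q_n satisfies sg(Q_n) ≤ (3/2)·2^(n/2) if n is even, and sg(Q_n) ≤ 2^((n+1)/2) if n is odd. -/
open SimpleGraph

/-- A set `S` of vertices is a strong geodetic set of `G` if one can fix, for each
pair of vertices of `S`, a single geodesic (shortest path) between them, so that
every vertex of the graph lies on one of the chosen geodesics. -/
def IsStrongGeodeticSet {V : Type*} (G : SimpleGraph V) (S : Set V) : Prop :=
  ∃ γ : ∀ u ∈ S, ∀ v ∈ S, G.Walk u v,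
    (∀ u (hu : u ∈ S) v (hv : v ∈ S), (γ u hu v hv).length = G.dist u v) ∧
    (∀ u (hu : u ∈ S) v (hv : v ∈ S), γ u hu v hv = (γ v hv u hu).reverse) ∧
    (∀ x : V, ∃ u, ∃ hu : u ∈ S, ∃ v, ∃ hv : v ∈ S, x ∈ (γ u hu v hv).support)

/-- The strong geodetic number of a finite graph: the minimum cardinality of a
strong geodetic set. -/
noncomputable def strongGeodeticNumber {V : Type*} [Fintype V] (G : SimpleGraph V) : ℕ :=
  sInf {k | ∃ S : Finset V, S.card = k ∧ IsStrongGeodeticSet G ↑S}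

/-- The hypercube graph `Qₙ` on vertex set `{0,1}ⁿ`; two vertices are adjacent iff
they differ in exactly one coordinate. -/
def hypercube (n : ℕ) : SimpleGraph (Fin n → Bool) :=
  SimpleGraph.fromRel fun x y => ∃ i, x i ≠ y i ∧ ∀ j, j ≠ i → x j = y j

namespace SG

variable {n : ℕ}

/-- Hamming-style distance via countP. -/
def hd (x y : Fin n → Bool) : ℕ := (List.finRange n).countP (fun i => decide (x i ≠ y i))

lemma hd_self (x : Fin n → Bool) : hd x x = 0 := by
  simp [hd, List.countP_eq_zero]

lemma countP_le_add_of_imp {α : Type*} (l : List α) (p q r : α → Bool)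
    (h : ∀ a, p a → (q a ∨ r a)) : l.countP p ≤ l.countP q + l.countP r := by
  induction l with
  | nil => simp
  | cons a l ih =>
    simp only [List.countP_cons]
    by_cases hp : p a <;> by_cases hq : q a <;> by_cases hr : r a <;>
        simp [hp, hq, hr] <;>
        first
          | omega
          | (rcases h a hp with h' | h' <;> simp_all)

lemma hd_triangle (x y z : Fin n → Bool) : hd x z ≤ hd x y + hd y z := by
  apply countP_le_add_of_imp
  intro i hi
  by_cases h : x i = y i
  · right; simp_all
  · left; simp_all

lemma adj_hd_le (x y : Fin n → Bool) (h : (hypercube n).Adj x y) : hd x y ≤ 1 := by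
  rw [hypercube, fromRel_adj] at h
  obtain ⟨hne, h | h⟩ := h
  all_goals
    obtain ⟨i, hi, hj⟩ := h
    calc hd x y ≤ (List.finRange n).countP (fun j => j == i) := by
          apply List.countP_mono_left
          intro a _ ha
          simp only [beq_iff_eq]
          by_contra hne'
          · have := hj a hne'
            simp_all
      _ ≤ 1 := by
          have : (List.finRange n).countP (fun j => j == i) = (List.finRange n).count i := rfl
          rw [this]
          exact List.nodup_iff_count_le_one.1 (List.nodup_finRange n) i

lemma adj_update (x y : Fin n → Bool) (i : Fin n) (h : x i ≠ y i) :
    (hypercube n).Adj x (Function.update x i (y i)) := by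
  rw [hypercube, fromRel_adj]
  constructor
  · intro hxy
    apply h
    have := congrFun hxy i
    rwa [Function.update_self] at this
  · left
    exact ⟨i, by simpa using h, fun j hj => (Function.update_of_ne hj _ _).symm⟩

/-- Walk from `x` to `y` flipping the coordinates in `l` (in order) where they differ. -/
def go : (l : List (Fin n)) → (x y : Fin n → Bool) → (∀ i ∉ l, x i = y i) →
    (hypercube n).Walk x y
  | [], x, _, h => Walk.copy Walk.nil rfl (funext fun i => h i (List.not_mem_nil))
  | i :: l, x, y, h =>
    if hxy : x i = y i then
      go l x y (fun j hj => by
        by_cases hji : j = i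
        · subst hji; exact hxy
        · exact h j (by simp [hji, hj]))
    else
      Walk.cons (adj_update x y i hxy)
        (go l (Function.update x i (y i)) y (fun j hj => by
          by_cases hji : j = i
          · subst hji; simp
          · rw [Function.update_of_ne hji]
            exact h j (by simp [hji, hj])))

lemma go_length : ∀ (l : List (Fin n)) (x y : Fin n → Bool) h, l.Nodup →
    (go l x y h).length = l.countP (fun i => decide (x i ≠ y i))
  | [], x, y, h, _ => by simp [go]
  | i :: l, x, y, h, hnd => by
    rw [go]
    rcases List.nodup_cons.1 hnd with ⟨hi, hnd'⟩
    split_ifs with hxy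
    · rw [go_length l x y _ hnd', List.countP_cons]
      simp [hxy]
    · simp only [Walk.length_cons, List.countP_cons]
      rw [go_length l _ y _ hnd']
      have : l.countP (fun j => decide (Function.update x i (y i) j ≠ y j)) =
          l.countP (fun j => decide (x j ≠ y j)) := by
        apply List.countP_congr
        intro j hj
        have hji : j ≠ i := fun e => hi (e ▸ hj)
        simp [Function.update_of_ne hji]
      rw [this]
      simp [hxy]

lemma go_self : ∀ (l : List (Fin n)) (x : Fin n → Bool) h, go l x x h = Walk.nil
  | [], x, h => Walk.copy_rfl_rfl _
  | i :: l, x, h => by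
    rw [go]
    split_ifs with hxy
    · exact go_self l x _
    · exact absurd rfl hxy

lemma mem_support_go : ∀ (l : List (Fin n)) (x y : Fin n → Bool) h (j : ℕ),
    (fun i => if i ∈ l.take j then y i else x i) ∈ (go l x y h).support
  | [], x, y, h, j => by
    have : (fun i => if i ∈ ([] : List (Fin n)).take j then y i else x i) = y := by
      funext i
      simp only [List.take_nil, List.not_mem_nil, if_false]
      exact h i (List.not_mem_nil)
    rw [this, go]
    simp only [Walk.support_copy, Walk.support_nil, List.mem_singleton]
    exact funext fun i => (h i (List.not_mem_nil)).symm
  | i :: l, x, y, h, 0 => by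
    have : (fun m => if m ∈ (i :: l).take 0 then y m else x m) = x := by
      funext m; simp
    rw [this]
    exact Walk.start_mem_support _
  | i :: l, x, y, h, j + 1 => by
    rw [go]
    split_ifs with hxy
    · have ih := mem_support_go l x y (by
        intro a ha
        by_cases hai : a = i
        · subst hai; exact hxy
        · exact h a (by simp [hai, ha])) j
      have : (fun m => if m ∈ (i :: l).take (j+1) then y m else x m) =
          (fun m => if m ∈ l.take j then y m else x m) := by
        funext m
        by_cases hmi : m = i
        · subst hmi
          by_cases hm : m ∈ l.take j <;> simp [hm, hxy]
        · simp [List.take_cons, hmi]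
      rw [this]
      exact ih
    · have ih := mem_support_go l (Function.update x i (y i)) y (by
        intro a ha
        by_cases hai : a = i
        · subst hai; simp
        · rw [Function.update_of_ne hai]
          exact h a (by simp [hai, ha])) j
      have : (fun m => if m ∈ (i :: l).take (j+1) then y m else x m) =
          (fun m => if m ∈ l.take j then y m else Function.update x i (y i) m) := by
        funext m
        by_cases hmi : m = i
        · subst hmi
          by_cases hm : m ∈ l.take j <;> simp [hm]
        · rw [Function.update_of_ne hmi]
          simp [List.take_cons, hmi]
      rw [this, Walk.support_cons]
      exact List.mem_cons_of_mem _ ih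

/-- The canonical walk between two vertices: flip differing coordinates in ascending order. -/
def W (x y : Fin n → Bool) : (hypercube n).Walk x y :=
  go (List.finRange n) x y (fun i hi => absurd (List.mem_finRange i) hi)

lemma W_length (x y : Fin n → Bool) : (W x y).length = hd x y :=
  go_length _ x y _ (List.nodup_finRange n)

lemma walk_le_length {x y : Fin n → Bool} : ∀ (w : (hypercube n).Walk x y), hd x y ≤ w.length := by
  intro w
  induction w with
  | nil => simp [hd_self]
  | @cons a b c hadj w ih =>
    calc hd a c ≤ hd a b + hd b c := hd_triangle a b c
      _ ≤ 1 + w.length := Nat.add_le_add (adj_hd_le a b hadj) ih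
      _ = w.length + 1 := Nat.add_comm _ _

lemma dist_eq_hd (x y : Fin n → Bool) : (hypercube n).dist x y = hd x y := by
  apply le_antisymm
  · calc (hypercube n).dist x y ≤ (W x y).length := dist_le _
      _ = hd x y := W_length x y
  · obtain ⟨w, hw⟩ := Reachable.exists_walk_length_eq_dist ⟨W x y⟩
    calc hd x y ≤ w.length := walk_le_length w
      _ = (hypercube n).dist x y := hw

lemma W_length_dist (x y : Fin n → Bool) : (W x y).length = (hypercube n).dist x y := by
  rw [W_length, dist_eq_hd]

lemma mem_take_finRange (j : ℕ) (i : Fin n) : i ∈ (List.finRange n).take j ↔ (i : ℕ) < j := by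
  rw [List.mem_take_iff_getElem]
  constructor
  · rintro ⟨m, hm, rfl⟩
    simp only [List.getElem_finRange, Fin.coe_cast]
    simp at hm
    omega
  · intro hij
    refine ⟨i, ?_, ?_⟩
    · simp only [List.length_take, List.length_finRange, lt_min_iff]
      exact ⟨hij, i.isLt⟩
    · simp [List.getElem_finRange]

lemma mem_support_W (x y : Fin n → Bool) (j : ℕ) :
    (fun i : Fin n => if (i : ℕ) < j then y i else x i) ∈ (W x y).support := by
  have := mem_support_go (List.finRange n) x y (fun i hi => absurd (List.mem_finRange i) hi) j
  have e : (fun i => if i ∈ (List.finRange n).take j then y i else x i) =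
      (fun i : Fin n => if (i : ℕ) < j then y i else x i) := by
    funext i
    by_cases hm : i ∈ (List.finRange n).take j
    · rw [if_pos hm, if_pos ((mem_take_finRange j i).1 hm)]
    · rw [if_neg hm, if_neg (fun hc => hm ((mem_take_finRange j i).2 hc))]
  rwa [e] at this

lemma sg_le {V : Type*} [Fintype V] (G : SimpleGraph V) (S : Finset V)
    (h : IsStrongGeodeticSet G ↑S) : strongGeodeticNumber G ≤ S.card :=
  Nat.sInf_le ⟨S, rfl, h⟩


/-! ### The generic strong geodetic set criterion -/

lemma isSGS_generic {n : ℕ} (e : (Fin n → Bool) → ℕ) (he : Function.Injective e)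
    (S : Set (Fin n → Bool))
    (cover : ∀ c : Fin n → Bool, ∃ x, x ∈ S ∧ ∃ y, y ∈ S ∧ e x ≤ e y ∧ ∃ j : ℕ,
      c = fun i : Fin n => if (i : ℕ) < j then y i else x i) :
    IsStrongGeodeticSet (hypercube n) S := by
  refine ⟨fun u _ v _ => if e u ≤ e v then W u v else (W v u).reverse, ?_, ?_, ?_⟩
  · intro u _ v _
    show (if e u ≤ e v then W u v else (W v u).reverse).length = _
    split_ifs with h
    · exact W_length_dist u v
    · rw [Walk.length_reverse, W_length_dist, dist_comm]
  · intro u hu v hv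
    show (if e u ≤ e v then W u v else (W v u).reverse) =
      (if e v ≤ e u then W v u else (W u v).reverse).reverse
    rcases le_or_gt (e u) (e v) with h | h
    · rcases le_or_gt (e v) (e u) with h' | h'
      · have huv : u = v := he (le_antisymm h h')
        subst huv
        simp only [if_pos h]
        rw [show W u u = Walk.nil from go_self _ u _]
        rfl
      · rw [if_pos h, if_neg (by omega), Walk.reverse_reverse]
    · rw [if_neg (by omega), if_pos h.le]
  · intro c
    obtain ⟨x, hx, y, hy, hxy, j, hc⟩ := cover c
    refine ⟨x, hx, y, hy, ?_⟩
    show c ∈ (if e x ≤ e y then W x y else (W y x).reverse).support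
    rw [if_pos hxy, hc]
    exact mem_support_W x y j

/-! ### The construction -/

/-- Build a vertex from block-1 bits `b`, extra bits `s`, and mirrored (possibly
flipped by `ε`) block-2 bits. -/
def phi (p q : ℕ) {n : ℕ} (hn : n = p + q + p) (ε : Bool) (s : Fin q → Bool)
    (b : Fin p → Bool) : Fin n → Bool := fun i =>
  if h : (i : ℕ) < p then b ⟨i, h⟩
  else if h2 : (i : ℕ) < p + q then s ⟨(i : ℕ) - p, by omega⟩
  else xor ε (b ⟨(i : ℕ) - (p + q), by have := i.isLt; omega⟩)

/-- Ordering function: the last extra coordinate is the most significant bit. -/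
noncomputable def eF (p q : ℕ) {n : ℕ} (hq : 1 ≤ q) (hn : n = p + q + p)
    (z : Fin n → Bool) : ℕ :=
  (cond (z ⟨p + q - 1, by omega⟩) (Fintype.card (Fin n → Bool)) 0) +
    ((Fintype.equivFin (Fin n → Bool)) z : ℕ)

lemma eF_injective (p q : ℕ) {n : ℕ} (hq : 1 ≤ q) (hn : n = p + q + p) :
    Function.Injective (eF p q hq hn) := by
  intro z1 z2 h
  unfold eF at h
  have h1 := ((Fintype.equivFin (Fin n → Bool)) z1).isLt
  have h2 := ((Fintype.equivFin (Fin n → Bool)) z2).isLt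
  have hval : ((Fintype.equivFin (Fin n → Bool)) z1 : ℕ) =
      ((Fintype.equivFin (Fin n → Bool)) z2 : ℕ) := by
    cases hb1 : z1 ⟨p + q - 1, by omega⟩ <;> cases hb2 : z2 ⟨p + q - 1, by omega⟩ <;>
      rw [hb1, hb2] at h <;> simp only [cond_false, cond_true, Nat.zero_add] at h <;> omega
  exact (Fintype.equivFin (Fin n → Bool)).injective (Fin.ext hval)

lemma eF_le (p q : ℕ) {n : ℕ} (hq : 1 ≤ q) (hn : n = p + q + p)
    (z1 z2 : Fin n → Bool) (h1 : z1 ⟨p + q - 1, by omega⟩ = false)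
    (h2 : z2 ⟨p + q - 1, by omega⟩ = true) : eF p q hq hn z1 ≤ eF p q hq hn z2 := by
  unfold eF
  rw [h1, h2]
  have := ((Fintype.equivFin (Fin n → Bool)) z1).isLt
  simp only [cond_false, cond_true, Nat.zero_add]
  omega

lemma cover_eq (p q : ℕ) {n : ℕ} (hn : n = p + q + p) (c : Fin n → Bool)
    (sx sy : Fin q → Bool) (εy : Bool) (t : ℕ) (ht : t ≤ q)
    (hext : ∀ m (hm : m < q), c ⟨p + m, by omega⟩ = if m < t then sy ⟨m, hm⟩ else sx ⟨m, hm⟩) :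
    c = fun i : Fin n => if (i : ℕ) < p + t
      then phi p q hn εy sy (fun j => c ⟨j, by have := j.isLt; omega⟩) i
      else phi p q hn false sx (fun j => c ⟨p + q + (j : ℕ), by have := j.isLt; omega⟩) i := by
  funext i
  by_cases hi1 : (i : ℕ) < p
  · rw [if_pos (by omega)]
    unfold phi
    rw [dif_pos hi1]
  · by_cases hi2 : (i : ℕ) < p + q
    · have hm : (i : ℕ) - p < q := by omega
      have hc := hext ((i : ℕ) - p) hm
      have hfin : (⟨p + ((i : ℕ) - p), by omega⟩ : Fin n) = i := Fin.ext (by simp; omega)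
      rw [hfin] at hc
      by_cases hit : (i : ℕ) < p + t
      · rw [if_pos hit]
        unfold phi
        rw [dif_neg hi1, dif_pos hi2]
        rw [hc, if_pos (by omega)]
      · rw [if_neg hit]
        unfold phi
        rw [dif_neg hi1, dif_pos hi2]
        rw [hc, if_neg (by omega)]
    · rw [if_neg (by omega)]
      unfold phi
      rw [dif_neg hi1, dif_neg hi2]
      simp only [Bool.false_xor]
      exact congrArg c (Fin.ext (by simp; omega)).symm


/-! ### Odd case -/

lemma odd_case (p n : ℕ) (hn : n = p + 1 + p) :
    strongGeodeticNumber (hypercube n) ≤ 2 ^ p + 2 ^ p := by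
  classical
  set s0 : Fin 1 → Bool := fun _ => false with hs0
  set s1 : Fin 1 → Bool := fun _ => true with hs1
  set S : Finset (Fin n → Bool) :=
    (Finset.image (phi p 1 hn false s0) Finset.univ) ∪
    (Finset.image (phi p 1 hn true s1) Finset.univ) with hS
  have hsgs : IsStrongGeodeticSet (hypercube n) ↑S := by
    apply isSGS_generic (eF p 1 (le_refl 1) hn) (eF_injective p 1 (le_refl 1) hn)
    intro c
    set bR : Fin p → Bool := fun j => c ⟨p + 1 + (j : ℕ), by have := j.isLt; omega⟩ with hbR
    set bL : Fin p → Bool := fun j => c ⟨(j : ℕ), by have := j.isLt; omega⟩ with hbL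
    set t : ℕ := if c ⟨p, by omega⟩ = true then 1 else 0 with hts
    refine ⟨phi p 1 hn false s0 bR, ?_, phi p 1 hn true s1 bL, ?_, ?_, p + t, ?_⟩
    · simp only [hS, Finset.coe_union, Set.mem_union]
      left
      simp only [Finset.coe_image, Set.mem_image]
      exact ⟨bR, by simp, rfl⟩
    · simp only [hS, Finset.coe_union, Set.mem_union]
      right
      simp only [Finset.coe_image, Set.mem_image]
      exact ⟨bL, by simp, rfl⟩
    · apply eF_le
      · show (if h : (p : ℕ) < p then _ else if h2 : (p : ℕ) < p + 1 then _ else _) = false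
        rw [dif_neg (lt_irrefl p), dif_pos (by omega)]
      · show (if h : (p : ℕ) < p then _ else if h2 : (p : ℕ) < p + 1 then _ else _) = true
        rw [dif_neg (lt_irrefl p), dif_pos (by omega)]
    · apply cover_eq p 1 hn c s0 s1 true t
      · by_cases hc : c ⟨p, by omega⟩ = true <;> simp [hts, hc]
      · intro m hm
        have hm0 : m = 0 := by omega
        subst hm0
        have : (⟨p + 0, by omega⟩ : Fin n) = ⟨p, by omega⟩ := Fin.ext (by simp)
        rw [this]
        by_cases hc : c ⟨p, by omega⟩ = true
        · rw [hts, if_pos hc, if_pos (by norm_num), hc, hs1]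
        · rw [hts, if_neg hc, if_neg (by norm_num), hs0]
          simp only [Bool.not_eq_true] at hc
          exact hc
  calc strongGeodeticNumber (hypercube n) ≤ S.card := sg_le _ S hsgs
    _ ≤ 2 ^ p + 2 ^ p := by
        refine le_trans (Finset.card_union_le _ _) ?_
        have h1 : (Finset.image (phi p 1 hn false s0) Finset.univ).card ≤ 2 ^ p := by
          refine le_trans Finset.card_image_le ?_
          simp [Finset.card_univ]
        have h2 : (Finset.image (phi p 1 hn true s1) Finset.univ).card ≤ 2 ^ p := by
          refine le_trans Finset.card_image_le ?_
          simp [Finset.card_univ]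
        omega


/-! ### Even case -/

lemma even_case (p n : ℕ) (hn : n = p + 2 + p) :
    strongGeodeticNumber (hypercube n) ≤ 2 ^ p + 2 ^ p + 2 ^ p := by
  classical
  set s00 : Fin 2 → Bool := fun _ => false with hs00
  set s01 : Fin 2 → Bool := fun m => decide ((m : ℕ) = 1) with hs01
  set s11 : Fin 2 → Bool := fun _ => true with hs11
  have hq : 1 ≤ 2 := by norm_num
  set S : Finset (Fin n → Bool) :=
    (Finset.image (phi p 2 hn false s00) Finset.univ) ∪
    (Finset.image (phi p 2 hn false s01) Finset.univ) ∪
    (Finset.image (phi p 2 hn true s11) Finset.univ) with hS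
  have hsgs : IsStrongGeodeticSet (hypercube n) ↑S := by
    apply isSGS_generic (eF p 2 hq hn) (eF_injective p 2 hq hn)
    intro c
    set bR : Fin p → Bool := fun j => c ⟨p + 2 + (j : ℕ), by have := j.isLt; omega⟩ with hbR
    set bL : Fin p → Bool := fun j => c ⟨(j : ℕ), by have := j.isLt; omega⟩ with hbL
    have hxS : phi p 2 hn false s00 bR ∈ (↑S : Set (Fin n → Bool)) := by
      refine Finset.mem_coe.2 ?_
      exact Finset.mem_union_left _ (Finset.mem_union_left _
        (Finset.mem_image_of_mem _ (Finset.mem_univ bR)))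
    have hxbit : phi p 2 hn false s00 bR ⟨p + 2 - 1, by omega⟩ = false := by
      show (if h : (p + 2 - 1 : ℕ) < p then _ else if h2 : (p + 2 - 1 : ℕ) < p + 2 then _ else _)
          = false
      rw [dif_neg (by omega), dif_pos (by omega)]
    by_cases hc0 : c ⟨p, by omega⟩ = true
    · -- y in class B11
      set t : ℕ := if c ⟨p + 1, by omega⟩ = true then 2 else 1 with hts
      refine ⟨phi p 2 hn false s00 bR, hxS, phi p 2 hn true s11 bL, ?_, ?_, p + t, ?_⟩
      · exact Finset.mem_coe.2 (Finset.mem_union_right _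
          (Finset.mem_image_of_mem _ (Finset.mem_univ bL)))
      · apply eF_le _ _ hq _ _ _ hxbit
        show (if h : (p + 2 - 1 : ℕ) < p then _ else if h2 : (p + 2 - 1 : ℕ) < p + 2 then _ else _)
            = true
        rw [dif_neg (by omega), dif_pos (by omega)]
      · apply cover_eq p 2 hn c s00 s11 true t
        · by_cases hc1 : c ⟨p + 1, by omega⟩ = true <;> simp [hts, hc1]
        · intro m hm
          have : m = 0 ∨ m = 1 := by omega
          rcases this with hm0 | hm1
          · subst hm0
            have he : (⟨p + 0, by omega⟩ : Fin n) = ⟨p, by omega⟩ := Fin.ext (by simp)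
            rw [he, hc0]
            have ht1 : 0 < t := by rw [hts]; split_ifs <;> omega
            rw [if_pos ht1, hs11]
          · subst hm1
            by_cases hc1 : c ⟨p + 1, by omega⟩ = true
            · have ht2 : t = 2 := by rw [hts, if_pos hc1]
              rw [hc1, ht2, if_pos (by norm_num), hs11]
            · have ht1 : t = 1 := by rw [hts, if_neg hc1]
              simp only [Bool.not_eq_true] at hc1
              rw [hc1, ht1, if_neg (by norm_num), hs00]
    · -- y in class A01
      set t : ℕ := if c ⟨p + 1, by omega⟩ = true then 2 else 0 with hts
      refine ⟨phi p 2 hn false s00 bR, hxS, phi p 2 hn false s01 bL, ?_, ?_, p + t, ?_⟩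
      · exact Finset.mem_coe.2 (Finset.mem_union_left _ (Finset.mem_union_right _
          (Finset.mem_image_of_mem _ (Finset.mem_univ bL))))
      · apply eF_le _ _ hq _ _ _ hxbit
        show (if h : (p + 2 - 1 : ℕ) < p then _ else if h2 : (p + 2 - 1 : ℕ) < p + 2 then _ else _)
            = true
        rw [dif_neg (by omega), dif_pos (by omega)]
        rw [hs01]
        simp only [decide_eq_true_eq]
        omega
      · apply cover_eq p 2 hn c s00 s01 false t
        · by_cases hc1 : c ⟨p + 1, by omega⟩ = true <;> simp [hts, hc1]
        · intro m hm
          have : m = 0 ∨ m = 1 := by omega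
          rcases this with hm0 | hm1
          · subst hm0
            have he : (⟨p + 0, by omega⟩ : Fin n) = ⟨p, by omega⟩ := Fin.ext (by simp)
            rw [he]
            simp only [Bool.not_eq_true] at hc0
            rw [hc0]
            split_ifs with h
            · rw [hs01]; simp
            · rw [hs00]
          · subst hm1
            by_cases hc1 : c ⟨p + 1, by omega⟩ = true
            · have ht2 : t = 2 := by rw [hts, if_pos hc1]
              rw [hc1, ht2, if_pos (by norm_num), hs01]
              simp
            · have ht0 : t = 0 := by rw [hts, if_neg hc1]
              simp only [Bool.not_eq_true] at hc1
              rw [hc1, ht0, if_neg (by norm_num), hs00]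
  calc strongGeodeticNumber (hypercube n) ≤ S.card := sg_le _ S hsgs
    _ ≤ 2 ^ p + 2 ^ p + 2 ^ p := by
        refine le_trans (Finset.card_union_le _ _) ?_
        have h3 : (Finset.image (phi p 2 hn true s11) Finset.univ).card ≤ 2 ^ p :=
          le_trans Finset.card_image_le (by simp [Finset.card_univ])
        have h12 : ((Finset.image (phi p 2 hn false s00) Finset.univ) ∪
            (Finset.image (phi p 2 hn false s01) Finset.univ)).card ≤ 2 ^ p + 2 ^ p := by
          refine le_trans (Finset.card_union_le _ _) ?_
          have h1 : (Finset.image (phi p 2 hn false s00) Finset.univ).card ≤ 2 ^ p :=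
            le_trans Finset.card_image_le (by simp [Finset.card_univ])
          have h2 : (Finset.image (phi p 2 hn false s01) Finset.univ).card ≤ 2 ^ p :=
            le_trans Finset.card_image_le (by simp [Finset.card_univ])
          omega
        omega

end SG

/-- Theorem 4.2: for `n ≥ 1`, `sg(Qₙ) ≤ (3/2)·2^(n/2)` if `n` is even and
`sg(Qₙ) ≤ 2^((n+1)/2)` if `n` is odd. -/
theorem sg_hypercube_upper (n : ℕ) (hn : 1 ≤ n) :
    (Even n → (strongGeodeticNumber (hypercube n) : ℝ) ≤
      3 / 2 * (2 : ℝ) ^ ((n : ℝ) / 2)) ∧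
    (Odd n → (strongGeodeticNumber (hypercube n) : ℝ) ≤
      (2 : ℝ) ^ (((n : ℝ) + 1) / 2)) := by
  constructor
  · intro he
    obtain ⟨m, hm⟩ := he
    have hm1 : 1 ≤ m := by omega
    set p := m - 1 with hp
    have hnp : n = p + 2 + p := by omega
    have h1 : strongGeodeticNumber (hypercube n) ≤ 2 ^ p + 2 ^ p + 2 ^ p :=
      SG.even_case p n hnp
    have h2 : (strongGeodeticNumber (hypercube n) : ℝ) ≤ ((2 ^ p + 2 ^ p + 2 ^ p : ℕ) : ℝ) :=
      Nat.cast_le.2 h1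
    refine le_trans h2 ?_
    have hexp : ((n : ℝ) / 2) = ((p + 1 : ℕ) : ℝ) := by
      have : (n : ℝ) = ((p + 2 + p : ℕ) : ℝ) := by rw [← hnp]
      rw [this]
      push_cast
      ring
    rw [hexp, Real.rpow_natCast]
    push_cast
    rw [pow_succ]
    ring_nf
    nlinarith [pow_pos (by norm_num : (0:ℝ) < 2) p]
  · intro ho
    obtain ⟨p, hpn⟩ := ho
    have hnp : n = p + 1 + p := by omega
    have h1 : strongGeodeticNumber (hypercube n) ≤ 2 ^ p + 2 ^ p :=
      SG.odd_case p n hnp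
    have h2 : (strongGeodeticNumber (hypercube n) : ℝ) ≤ ((2 ^ p + 2 ^ p : ℕ) : ℝ) :=
      Nat.cast_le.2 h1
    refine le_trans h2 ?_
    have hexp : (((n : ℝ) + 1) / 2) = ((p + 1 : ℕ) : ℝ) := by
      have : (n : ℝ) = ((2 * p + 1 : ℕ) : ℝ) := by rw [← hpn]
      rw [this]
      push_cast
      ring
    rw [hexp, Real.rpow_natCast]
    push_cast
    rw [pow_succ]
    ring_nf
    exact le_rfl
end

section
/- For all integers n and n_0 with n ≥ n_0 ≥ 1, the strong geodetic number of the hypercube Q_n satisfies sg(Q_n) ≤ 2^(n - n_0) + 2^(n_0 - 1). -/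
open SimpleGraph

namespace SGAux

variable {n : ℕ}

def flip (u : Fin n → Bool) (i : Fin n) : Fin n → Bool := Function.update u i (!(u i))

lemma flip_apply_self (u : Fin n → Bool) (i : Fin n) : flip u i i = !(u i) :=
  Function.update_self i _ u

lemma flip_apply_ne (u : Fin n → Bool) {i j : Fin n} (h : j ≠ i) : flip u i j = u j :=
  Function.update_of_ne h _ u

lemma adj_flip (u : Fin n → Bool) (i : Fin n) : (hypercube n).Adj u (flip u i) := by
  rw [hypercube, fromRel_adj]
  refine ⟨fun h => ?_, Or.inl ⟨i, by simp [flip_apply_self], fun j hj => (flip_apply_ne u hj).symm⟩⟩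
  have := congrFun h i
  rw [flip_apply_self] at this
  simp at this

def flipWalk : (u : Fin n → Bool) → (L : List (Fin n)) → (hypercube n).Walk u (L.foldl flip u)
  | _, [] => Walk.nil
  | u, i :: L => Walk.cons (adj_flip u i) (flipWalk (flip u i) L)

lemma flipWalk_length (u : Fin n → Bool) (L : List (Fin n)) :
    (flipWalk u L).length = L.length := by
  induction L generalizing u with
  | nil => rfl
  | cons i L ih => simp [flipWalk, ih]

lemma foldl_mem_support (u : Fin n → Bool) (L₁ L₂ : List (Fin n)) :
    L₁.foldl flip u ∈ (flipWalk u (L₁ ++ L₂)).support := by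
  induction L₁ generalizing u with
  | nil => exact Walk.start_mem_support _
  | cons i L ih =>
    simp only [List.cons_append, flipWalk, Walk.support_cons, List.foldl_cons]
    exact List.mem_cons_of_mem _ (ih (flip u i))

lemma foldl_flip_apply (L : List (Fin n)) (h : L.Nodup) (u : Fin n → Bool) (j : Fin n) :
    (L.foldl flip u) j = if j ∈ L then !(u j) else u j := by
  induction L generalizing u with
  | nil => simp
  | cons i L ih =>
    obtain ⟨hi, hL⟩ := List.nodup_cons.mp h
    rw [List.foldl_cons, ih hL]
    by_cases hj : j ∈ L
    · have hne : j ≠ i := fun e => hi (e ▸ hj)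
      simp [hj, flip_apply_ne u hne, List.mem_cons, hne]
    · by_cases hji : j = i
      · subst hji; simp [hj, flip_apply_self]
      · simp [hj, hji, flip_apply_ne u hji]

def diffs (u v : Fin n → Bool) : Finset (Fin n) := Finset.univ.filter (fun i => u i ≠ v i)

lemma mem_diffs {u v : Fin n → Bool} {i : Fin n} : i ∈ diffs u v ↔ u i ≠ v i := by
  simp [diffs]

lemma diffs_comm (u v : Fin n → Bool) : diffs u v = diffs v u := by
  simp [diffs, ne_comm]

def diffList (u v : Fin n → Bool) : List (Fin n) := (diffs u v).sort (· ≤ ·)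

lemma mem_diffList {u v : Fin n → Bool} {i : Fin n} : i ∈ diffList u v ↔ u i ≠ v i := by
  rw [diffList, Finset.mem_sort, mem_diffs]

lemma nodup_diffList (u v : Fin n → Bool) : (diffList u v).Nodup :=
  Finset.sort_nodup _ _

lemma foldl_diffList (u v : Fin n → Bool) : (diffList u v).foldl flip u = v := by
  funext j
  rw [foldl_flip_apply _ (nodup_diffList u v) u j]
  by_cases h : u j = v j
  · simp [mem_diffList, h]
  · have : j ∈ diffList u v := mem_diffList.mpr h
    rw [if_pos this]
    revert h; cases u j <;> cases v j <;> simp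

def canon (u v : Fin n → Bool) : (hypercube n).Walk u v :=
  (flipWalk u (diffList u v)).copy rfl (foldl_diffList u v)

lemma canon_length (u v : Fin n → Bool) : (canon u v).length = (diffs u v).card := by
  rw [canon, Walk.length_copy, flipWalk_length, diffList, Finset.length_sort]

lemma canon_self (u : Fin n → Bool) : canon u u = Walk.nil := by
  have h0 : (canon u u).length = 0 := by
    rw [canon_length]
    simp [diffs]
  exact Walk.Nil.eq_nil (Walk.nil_iff_length_eq.mpr h0)

lemma adj_card_diffs {u v : Fin n → Bool} (h : (hypercube n).Adj u v) :
    (diffs u v).card = 1 := by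
  rw [hypercube, fromRel_adj] at h
  obtain ⟨hne, h | h⟩ := h <;> obtain ⟨i, hi, hj⟩ := h
  · have : diffs u v = {i} := by
      ext j
      simp only [mem_diffs, Finset.mem_singleton]
      constructor
      · intro hd; by_contra hji; exact hd (hj j hji)
      · rintro rfl; exact hi
    simp [this]
  · have : diffs u v = {i} := by
      ext j
      simp only [mem_diffs, Finset.mem_singleton]
      constructor
      · intro hd; by_contra hji; exact hd ((hj j hji).symm)
      · rintro rfl; exact fun e => hi e.symm
    simp [this]

lemma card_diffs_le_length {u v : Fin n → Bool} (p : (hypercube n).Walk u v) :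
    (diffs u v).card ≤ p.length := by
  induction p with
  | nil => simp [diffs]
  | @cons u v w h p ih =>
    have hsub : diffs u w ⊆ diffs u v ∪ diffs v w := by
      intro j hj
      rw [Finset.mem_union, mem_diffs, mem_diffs]
      rw [mem_diffs] at hj
      by_contra hc
      push_neg at hc
      exact hj (hc.1.trans hc.2)
    calc (diffs u w).card ≤ (diffs u v ∪ diffs v w).card := Finset.card_le_card hsub
      _ ≤ (diffs u v).card + (diffs v w).card := Finset.card_union_le _ _
      _ = 1 + (diffs v w).card := by rw [adj_card_diffs h]
      _ ≤ 1 + p.length := by omega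
      _ = (Walk.cons h p).length := by simp [Walk.length_cons]; omega

lemma dist_eq_card_diffs (u v : Fin n → Bool) :
    (hypercube n).dist u v = (diffs u v).card := by
  refine le_antisymm ?_ ?_
  · calc (hypercube n).dist u v ≤ (canon u v).length := dist_le _
      _ = _ := canon_length u v
  · obtain ⟨p, hp⟩ := (canon u v).reachable.exists_walk_length_eq_dist
    rw [← hp]
    exact card_diffs_le_length p

/-- The lexicographic strict order on vertices. -/
def lexLt (u v : Fin n → Bool) : Prop := Pi.Lex (· < ·) (@fun _ => (· < ·)) u v

lemma lexLt_trichotomy (u v : Fin n → Bool) : lexLt u v ∨ u = v ∨ lexLt v u :=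
  or_iff_not_imp_left.mpr fun h => or_iff_not_imp_right.mpr fun h' =>
  (Pi.isTrichotomous_lex (β := fun _ : Fin n => Bool) (· < ·) (@fun _ => (· < ·))
    (wellFounded_lt)).trichotomous u v h h'

lemma lexLt_asymm {u v : Fin n → Bool} (h : lexLt u v) : ¬ lexLt v u := fun h' =>
  lt_asymm (show toLex u < toLex v from h) (show toLex v < toLex u from h')

/-- A sorted list decomposes as the part satisfying a downward-closed predicate,
followed by the rest. -/
lemma filter_append_filter_of_sorted {L : List (Fin n)} (hs : L.Pairwise (· ≤ ·))
    (q : Fin n → Prop) [DecidablePred q] (hq : ∀ i j : Fin n, i ≤ j → q j → q i) :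
    L.filter (fun i => decide (q i)) ++ L.filter (fun i => decide (¬ q i)) = L := by
  induction L with
  | nil => simp
  | cons i L ih =>
    rw [List.pairwise_cons] at hs
    by_cases h : q i
    · have hd : decide (q i) = true := decide_eq_true h
      have hd2 : ¬ (decide (¬ q i) = true) := by simp [h]
      rw [List.filter_cons, List.filter_cons, if_pos hd, if_neg hd2, List.cons_append, ih hs.2]
    · have h1 : L.filter (fun i => decide (q i)) = [] := by
        rw [List.filter_eq_nil_iff]
        intro j hj hqj
        simp only [decide_eq_true_eq] at hqj
        exact h (hq i j (hs.1 j hj) hqj)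
      have h2 : L.filter (fun i => decide (¬ q i)) = L := by
        rw [List.filter_eq_self]
        intro j hj
        simp only [decide_eq_true_eq]
        intro hqj
        exact h (hq i j (hs.1 j hj) hqj)
      have hd : ¬ (decide (q i) = true) := by simp [h]
      have hd2 : decide (¬ q i) = true := decide_eq_true h
      rw [List.filter_cons, List.filter_cons, if_neg hd, if_pos hd2, h1, List.nil_append, h2]

end SGAux

open SGAux in
/-- Intermediate result in Theorem 4.2: for `n ≥ n₀ ≥ 1`,
`sg(Qₙ) ≤ 2^(n - n₀) + 2^(n₀ - 1)`. -/
theorem sg_hypercube_upper_split (n n₀ : ℕ) (h1 : 1 ≤ n₀) (h2 : n₀ ≤ n) :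
    strongGeodeticNumber (hypercube n) ≤ 2 ^ (n - n₀) + 2 ^ (n₀ - 1) := by
  classical
  set m : ℕ := n - n₀ with hm_def
  have hmn : m + n₀ = n := by omega
  have hm : m < n := by omega
  set M : Fin n := ⟨m, hm⟩ with hM_def
  -- the strong geodetic set
  set A : Finset (Fin n → Bool) :=
    Finset.univ.filter (fun x => ∀ i : Fin n, (i : ℕ) ≤ m → x i = false) with hA_def
  set B : Finset (Fin n → Bool) :=
    Finset.univ.filter (fun x => ∀ i : Fin n, m ≤ (i : ℕ) → x i = true) with hB_def
  set S : Finset (Fin n → Bool) := A ∪ B with hS_def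
  -- a ∈ A, b ∈ B implies a <lex b
  have key : ∀ a ∈ A, ∀ b ∈ B, lexLt a b := by
    intro a ha b hb
    rw [hA_def, Finset.mem_filter] at ha
    rw [hB_def, Finset.mem_filter] at hb
    have hM_mem : M ∈ diffs a b := by
      rw [mem_diffs, ha.2 M (le_refl m), hb.2 M (le_refl m)]
      simp
    have hne : (diffs a b).Nonempty := ⟨M, hM_mem⟩
    set i₀ : Fin n := (diffs a b).min' hne with hi₀
    have hi₀_mem : i₀ ∈ diffs a b := (diffs a b).min'_mem hne
    have hi₀_le : i₀ ≤ M := (diffs a b).min'_le M hM_mem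
    have ha_i₀ : a i₀ = false := ha.2 i₀ hi₀_le
    have hb_i₀ : b i₀ = true := by
      rw [mem_diffs, ha_i₀] at hi₀_mem
      revert hi₀_mem
      cases b i₀ <;> simp
    refine ⟨i₀, fun j hj => ?_, ?_⟩
    · by_contra hd
      exact absurd ((diffs a b).min'_le j (mem_diffs.mpr hd)) (not_le.mpr hj)
    · rw [ha_i₀, hb_i₀]; exact Bool.false_lt_true
  -- the geodesics
  set γ : ∀ u ∈ (S : Set (Fin n → Bool)), ∀ v ∈ (S : Set (Fin n → Bool)), (hypercube n).Walk u v :=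
    fun u _ v _ => if lexLt u v then canon u v else
      (if lexLt v u then (canon v u).reverse else canon u v) with hγ_def
  have hlen : ∀ u (hu : u ∈ (S : Set (Fin n → Bool))) v (hv : v ∈ (S : Set (Fin n → Bool))),
      (γ u hu v hv).length = (hypercube n).dist u v := by
    intro u hu v hv
    rw [hγ_def]
    by_cases h : lexLt u v
    · simp [h, canon_length, dist_eq_card_diffs]
    · by_cases h' : lexLt v u
      · simp [h, h', Walk.length_reverse, canon_length, dist_eq_card_diffs, diffs_comm u v]
      · simp [h, h', canon_length, dist_eq_card_diffs]
  have hsymm : ∀ u (hu : u ∈ (S : Set (Fin n → Bool))) v (hv : v ∈ (S : Set (Fin n → Bool))),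
      γ u hu v hv = (γ v hv u hu).reverse := by
    intro u hu v hv
    rw [hγ_def]
    by_cases h : lexLt u v
    · have h' : ¬ lexLt v u := lexLt_asymm h
      simp [h, h', Walk.reverse_reverse]
    · by_cases h' : lexLt v u
      · simp [h, h']
      · have huv : u = v := by
          rcases lexLt_trichotomy u v with hh | hh | hh
          · exact absurd hh h
          · exact hh
          · exact absurd hh h'
        subst huv
        simp [h, canon_self]
  have hcover : ∀ x : Fin n → Bool, ∃ u, ∃ hu : u ∈ (S : Set (Fin n → Bool)),
      ∃ v, ∃ hv : v ∈ (S : Set (Fin n → Bool)), x ∈ (γ u hu v hv).support := by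
    intro w
    set a : Fin n → Bool := fun i => if (i : ℕ) ≤ m then false else w i with ha_def
    set b : Fin n → Bool := fun i => if m ≤ (i : ℕ) then true else w i with hb_def
    have haA : a ∈ A := by
      rw [hA_def, Finset.mem_filter]
      exact ⟨Finset.mem_univ _, fun i hi => if_pos hi⟩
    have hbB : b ∈ B := by
      rw [hB_def, Finset.mem_filter]
      exact ⟨Finset.mem_univ _, fun i hi => if_pos hi⟩
    have haS : a ∈ (S : Set (Fin n → Bool)) := by
      rw [Finset.mem_coe, hS_def]; exact Finset.mem_union_left _ haA
    have hbS : b ∈ (S : Set (Fin n → Bool)) := by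
      rw [Finset.mem_coe, hS_def]; exact Finset.mem_union_right _ hbB
    have hlt : lexLt a b := key a haA b hbB
    refine ⟨a, haS, b, hbS, ?_⟩
    rw [hγ_def]
    simp only [if_pos hlt]
    rw [canon, Walk.support_copy]
    -- decompose the sorted diff list
    set q : Fin n → Prop := fun i => (i : ℕ) < m ∨ ((i : ℕ) = m ∧ w M = true) with hq_def
    have hqmono : ∀ i j : Fin n, i ≤ j → q j → q i := by
      intro i j hij hqj
      rcases hqj with hh | hh
      · left; exact lt_of_le_of_lt hij hh
      · rcases lt_or_eq_of_le (show (i : ℕ) ≤ m from hh.1 ▸ hij) with hlt' | heq'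
        · left; exact hlt'
        · right; exact ⟨heq', hh.2⟩
    have hdecomp := filter_append_filter_of_sorted (Finset.pairwise_sort (diffs a b) (· ≤ ·))
      q hqmono
    rw [show (diffs a b).sort (· ≤ ·) = diffList a b from rfl] at hdecomp
    rw [← hdecomp]
    have hw : ((diffList a b).filter (fun i => decide (q i))).foldl flip a = w := by
      funext j
      rw [foldl_flip_apply _ ((nodup_diffList a b).filter _) a j]
      have hmem : j ∈ (diffList a b).filter (fun i => decide (q i)) ↔ (a j ≠ b j ∧ q j) := by
        rw [List.mem_filter, mem_diffList, decide_eq_true_eq]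
      by_cases hjm : (j : ℕ) < m
      · have haj : a j = false := by rw [ha_def]; simp [le_of_lt hjm]
        have hbj : b j = w j := by rw [hb_def]; simp [not_le.mpr hjm]
        by_cases hwj : w j = true
        · have : j ∈ (diffList a b).filter (fun i => decide (q i)) := by
            rw [hmem, haj, hbj, hwj]
            exact ⟨by simp, Or.inl hjm⟩
          rw [if_pos this, haj, hwj]; rfl
        · have hwj' : w j = false := by revert hwj; cases w j <;> simp
          have : j ∉ (diffList a b).filter (fun i => decide (q i)) := by
            rw [hmem, haj, hbj, hwj']
            simp
          rw [if_neg this, haj, hwj']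
      · by_cases hjm' : (j : ℕ) = m
        · have hjM : j = M := Fin.ext hjm'
          have haj : a j = false := by rw [ha_def]; simp [le_of_eq hjm']
          have hbj : b j = true := by
            rw [hb_def]; simp [le_of_eq hjm'.symm]
          by_cases hwj : w j = true
          · have hmm : j ∈ (diffList a b).filter (fun i => decide (q i)) := by
              rw [hmem]
              refine ⟨by simp [haj, hbj], Or.inr ⟨hjm', ?_⟩⟩
              rw [← hjM]; exact hwj
            rw [if_pos hmm, haj, hwj]; rfl
          · have hwj' : w j = false := by revert hwj; cases w j <;> simp
            have hmm : j ∉ (diffList a b).filter (fun i => decide (q i)) := by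
              intro hc
              rcases (hmem.mp hc).2 with hh | hh
              · omega
              · rw [← hjM, hwj'] at hh
                exact Bool.false_ne_true hh.2
            rw [if_neg hmm, haj, hwj']
        · have hmj : m < (j : ℕ) := by omega
          have haj : a j = w j := by rw [ha_def]; simp [not_le.mpr hmj]
          have hmm : j ∉ (diffList a b).filter (fun i => decide (q i)) := by
            intro hc
            rcases (hmem.mp hc).2 with hh | hh
            · omega
            · omega
          rw [if_neg hmm, haj]
    have hmem2 := foldl_mem_support a ((diffList a b).filter (fun i => decide (q i)))
      ((diffList a b).filter (fun i => decide (¬ q i)))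
    rwa [hw] at hmem2
  have hSG : IsStrongGeodeticSet (hypercube n) (S : Set (Fin n → Bool)) :=
    ⟨γ, hlen, hsymm, hcover⟩
  -- cardinality bounds
  have cardA : A.card ≤ 2 ^ (n₀ - 1) := by
    have : A.card ≤ (Finset.univ : Finset (Fin (n₀ - 1) → Bool)).card := by
      apply Finset.card_le_card_of_injOn
        (fun x (j : Fin (n₀ - 1)) => x ⟨m + 1 + (j : ℕ), by omega⟩)
        (fun _ _ => Finset.mem_univ _)
      intro x hx y hy hxy
      rw [hA_def, Finset.mem_coe, Finset.mem_filter] at hx hy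
      funext i
      by_cases hi : (i : ℕ) ≤ m
      · rw [hx.2 i hi, hy.2 i hi]
      · have hmi : m < (i : ℕ) := not_le.mp hi
        have hj : (i : ℕ) - (m + 1) < n₀ - 1 := by omega
        have := congrFun hxy ⟨(i : ℕ) - (m + 1), hj⟩
        simpa [show m + 1 + ((i : ℕ) - (m + 1)) = (i : ℕ) by omega, Fin.eta] using this
    calc A.card ≤ (Finset.univ : Finset (Fin (n₀ - 1) → Bool)).card := this
      _ = 2 ^ (n₀ - 1) := by
        rw [Finset.card_univ, Fintype.card_fun]
        simp
  have cardB : B.card ≤ 2 ^ (n - n₀) := by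
    have : B.card ≤ (Finset.univ : Finset (Fin m → Bool)).card := by
      apply Finset.card_le_card_of_injOn
        (fun x (j : Fin m) => x ⟨(j : ℕ), lt_trans j.isLt hm⟩)
        (fun _ _ => Finset.mem_univ _)
      intro x hx y hy hxy
      rw [hB_def, Finset.mem_coe, Finset.mem_filter] at hx hy
      funext i
      by_cases hi : m ≤ (i : ℕ)
      · rw [hx.2 i hi, hy.2 i hi]
      · have hmi : (i : ℕ) < m := not_le.mp hi
        have := congrFun hxy ⟨(i : ℕ), hmi⟩
        simpa [Fin.eta] using this
    calc B.card ≤ (Finset.univ : Finset (Fin m → Bool)).card := this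
      _ = 2 ^ (n - n₀) := by
        rw [Finset.card_univ, Fintype.card_fun]
        simp [hm_def]
  calc strongGeodeticNumber (hypercube n) ≤ S.card := by
        apply Nat.sInf_le
        exact ⟨S, rfl, hSG⟩
    _ ≤ A.card + B.card := Finset.card_union_le _ _
    _ ≤ 2 ^ (n₀ - 1) + 2 ^ (n - n₀) := add_le_add cardA cardB
    _ = 2 ^ (n - n₀) + 2 ^ (n₀ - 1) := Nat.add_comm _ _
end

section
/- For all integers n and n_0 with n ≥ n_0 ≥ 4, the strong geodetic number of the hypercube Q_n satisfies sg(Q_n) ≤ 2^(n - n_0) + 2^(n_0 - 1) - (n_0 - 2)(n_0 - 3). -/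
open SimpleGraph

section StrongGeodeticDevelopment

open Finset List



variable {n : ℕ}

def flp (x : Fin n → Bool) (i : Fin n) : Fin n → Bool := Function.update x i (!x i)

lemma flp_apply (x : Fin n → Bool) (i j : Fin n) :
    flp x i j = if j = i then !x i else x j := by
  by_cases h : j = i
  · subst h; simp [flp]
  · simp [flp, Function.update_of_ne h, h]

lemma hypercube_adj_flp (x : Fin n → Bool) (i : Fin n) : (hypercube n).Adj x (flp x i) := by
  rw [hypercube, fromRel_adj]
  refine ⟨fun h => ?_, Or.inl ⟨i, ?_, fun j hj => ?_⟩⟩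
  · have := congrFun h i
    simp [flp_apply] at this
  · simp [flp_apply]
  · simp [flp_apply, hj]

def applyList (x : Fin n → Bool) (L : List (Fin n)) : Fin n → Bool := L.foldl flp x

@[simp] lemma applyList_nil (x : Fin n → Bool) : applyList x ([] : List (Fin n)) = x := rfl

@[simp] lemma applyList_cons (x : Fin n → Bool) (i : Fin n) (L : List (Fin n)) :
    applyList x (i :: L) = applyList (flp x i) L := rfl

def walkOfList (x : Fin n → Bool) : (L : List (Fin n)) → (hypercube n).Walk x (applyList x L)
  | [] => Walk.nil
  | i :: L => Walk.cons (hypercube_adj_flp x i) (walkOfList (flp x i) L)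

@[simp] lemma walkOfList_length (x : Fin n → Bool) (L : List (Fin n)) :
    (walkOfList x L).length = L.length := by
  induction L generalizing x with
  | nil => rfl
  | cons i L ih => simp [walkOfList, ih]

lemma mem_support_walkOfList {x z : Fin n → Bool} {L : List (Fin n)} :
    z ∈ (walkOfList x L).support ↔ ∃ k, z = applyList x (L.take k) := by
  induction L generalizing x with
  | nil =>
    simp only [walkOfList, Walk.support_nil, List.mem_singleton]
    change z ∈ [x] ↔ _; rw [List.mem_singleton]
    constructor
    · rintro rfl; exact ⟨0, rfl⟩
    · rintro ⟨k, rfl⟩; simp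
  | cons i L ih =>
    simp only [walkOfList, Walk.support_cons, List.mem_cons, ih]
    change z ∈ x :: (walkOfList (flp x i) L).support ↔ _; rw [List.mem_cons, ih]
    constructor
    · rintro (rfl | ⟨k, rfl⟩)
      · exact ⟨0, rfl⟩
      · exact ⟨k + 1, by simp⟩
    · rintro ⟨k, rfl⟩
      cases k with
      | zero => left; rfl
      | succ k => right; exact ⟨k, by simp⟩

lemma applyList_apply {L : List (Fin n)} (hL : L.Nodup) (x : Fin n → Bool) (i : Fin n) :
    applyList x L i = if i ∈ L then !x i else x i := by
  induction L generalizing x with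
  | nil => simp
  | cons a L ih =>
    obtain ⟨ha, hL⟩ := List.nodup_cons.mp hL
    rw [applyList_cons, ih hL]
    by_cases hia : i = a
    · subst hia
      simp [if_neg ha, flp_apply]
    · simp [flp_apply, hia, List.mem_cons, hia]

lemma hamming_applyList {L : List (Fin n)} (hL : L.Nodup) (x : Fin n → Bool) :
    hammingDist x (applyList x L) = L.length := by
  rw [hammingDist]
  have : ({i | x i ≠ applyList x L i} : Finset (Fin n)) = L.toFinset := by
    ext i
    simp only [Finset.mem_filter, Finset.mem_univ, true_and, List.mem_toFinset,
      applyList_apply hL]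
    by_cases h : i ∈ L <;> simp [h]
  rw [this, List.card_toFinset, List.dedup_eq_self.mpr hL]

lemma adj_hammingDist {x y : Fin n → Bool} (h : (hypercube n).Adj x y) :
    hammingDist x y = 1 := by
  rw [hypercube, fromRel_adj] at h
  obtain ⟨hne, h | h⟩ := h <;> [skip; skip] <;>
    obtain ⟨i, hi, hj⟩ := h <;>
  · rw [hammingDist]
    rw [show ({j | x j ≠ y j} : Finset (Fin n)) = {i} from ?_]
    · simp
    · ext j
      simp only [Finset.mem_filter, Finset.mem_univ, true_and, Finset.mem_singleton]
      constructor
      · intro hj'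
        by_contra hji
        exact hj' (by first | exact hj j hji | exact (hj j hji).symm)
      · rintro rfl
        first | exact hi | exact hi.symm

lemma hamming_le_walk_length {x y : Fin n → Bool} (p : (hypercube n).Walk x y) :
    hammingDist x y ≤ p.length := by
  induction p with
  | nil => simp
  | cons h p ih =>
    calc hammingDist _ _ ≤ hammingDist _ _ + hammingDist _ _ := hammingDist_triangle _ _ _
    _ ≤ 1 + p.length := by
        rw [adj_hammingDist h]; omega
    _ = _ := by simp [Walk.length_cons]; omega

lemma dist_eq_hamming {x y : Fin n → Bool} (p : (hypercube n).Walk x y)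
    (hp : p.length = hammingDist x y) : (hypercube n).dist x y = hammingDist x y := by
  refine le_antisymm (hp ▸ SimpleGraph.dist_le p) ?_
  obtain ⟨q, hq⟩ := (p.reachable).exists_walk_length_eq_dist
  rw [← hq]
  exact hamming_le_walk_length q


structure Ctx where
  n : ℕ
  m : ℕ
  h4 : 4 ≤ m
  hmn : m ≤ n

namespace Ctx
variable (c : Ctx)

def r : ℕ := c.m - 1

lemma hr : 3 ≤ c.r := by have := c.h4; unfold r; omega
lemma hrn : c.r < c.n := by have := c.h4; have := c.hmn; unfold r; omega
lemma hrpos : 0 < c.r := by have := c.hr; omega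

def cc (t : ℕ) : Fin c.n :=
  ⟨t % c.r, lt_trans (Nat.mod_lt _ c.hrpos) c.hrn⟩

def sp : Fin c.n := ⟨c.r, c.hrn⟩

lemma cc_inj {a b : ℕ} : c.cc a = c.cc b ↔ a % c.r = b % c.r := by
  unfold cc
  rw [Fin.mk.injEq]

lemma cc_val (t : ℕ) : (c.cc t).val = t % c.r := rfl

lemma cc_val_lt (t : ℕ) : (c.cc t).val < c.r := Nat.mod_lt _ c.hrpos

def len (i : ℕ) : ℕ := if i = 0 then c.r else c.r - 1

lemma len_le (i : ℕ) : c.len i ≤ c.r := by unfold len; split <;> omega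

lemma le_len (i : ℕ) : c.r - 1 ≤ c.len i := by unfold len; split <;> omega

def cycL (i k : ℕ) : List (Fin c.n) := (List.range k).map (fun t => c.cc (i + t))

lemma mem_cycL {x : Fin c.n} {i k : ℕ} : x ∈ c.cycL i k ↔ ∃ t < k, x = c.cc (i + t) := by
  simp [cycL, eq_comm]

lemma cycL_length (i k : ℕ) : (c.cycL i k).length = k := by simp [cycL]

lemma nodup_cycL {i k : ℕ} (hk : k ≤ c.r) : (c.cycL i k).Nodup := by
  refine List.Nodup.map_on ?_ List.nodup_range
  intro t₁ h₁ t₂ h₂ h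
  rw [List.mem_range] at h₁ h₂
  rw [cc_inj] at h
  have h' : t₁ % c.r = t₂ % c.r := Nat.ModEq.add_left_cancel' i h
  rwa [Nat.mod_eq_of_lt (by omega), Nat.mod_eq_of_lt (by omega)] at h'

lemma cycL_take {i k l : ℕ} (h : k ≤ l) : (c.cycL i l).take k = c.cycL i k := by
  unfold cycL
  rw [← List.map_take, List.take_range, Nat.min_eq_left h]

def C : Finset (Fin c.n) := (c.cycL 0 c.r).toFinset

lemma mem_C {x : Fin c.n} : x ∈ c.C ↔ x.val < c.r := by
  rw [C, List.mem_toFinset, mem_cycL]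
  constructor
  · rintro ⟨t, ht, rfl⟩; exact c.cc_val_lt _
  · intro h
    exact ⟨x.val, h, by rw [Fin.ext_iff, cc_val]; simp [Nat.mod_eq_of_lt h]⟩

lemma card_C : c.C.card = c.r := by
  rw [C, List.toFinset_card_of_nodup (c.nodup_cycL le_rfl), cycL_length]

lemma sp_not_mem_C : c.sp ∉ c.C := by simp [mem_C, sp]

lemma cycL_subset_C {i k : ℕ} {x : Fin c.n} (h : x ∈ c.cycL i k) : x ∈ c.C := by
  rw [mem_cycL] at h
  obtain ⟨t, _, rfl⟩ := h
  rw [mem_C]; exact c.cc_val_lt _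

lemma sp_not_mem_cycL {i k : ℕ} : c.sp ∉ c.cycL i k := by
  intro h
  have := c.cycL_subset_C h
  exact c.sp_not_mem_C this

lemma card_cycL {i k : ℕ} (hk : k ≤ c.r) : (c.cycL i k).toFinset.card = k := by
  rw [List.toFinset_card_of_nodup (c.nodup_cycL hk), cycL_length]

lemma start_mem {i k : ℕ} (hk : 1 ≤ k) : c.cc i ∈ (c.cycL i k).toFinset := by
  rw [List.mem_toFinset, mem_cycL]
  exact ⟨0, by omega, by rw [Nat.add_zero]⟩

lemma pred_not_mem {i k : ℕ} (hk : k ≤ c.r - 1) :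
    c.cc (i + (c.r - 1)) ∉ (c.cycL i k).toFinset := by
  have hr := c.hr
  rw [List.mem_toFinset, mem_cycL]
  rintro ⟨t, ht, h⟩
  rw [cc_inj] at h
  have h' : t % c.r = (c.r - 1) % c.r := Nat.ModEq.add_left_cancel' i h.symm
  rw [Nat.mod_eq_of_lt (by omega), Nat.mod_eq_of_lt (by omega)] at h'
  omega

lemma interval_inj {i i' k k' : ℕ} (hi : i < c.r) (hi' : i' < c.r)
    (hk1 : 1 ≤ k) (hk : k ≤ c.r - 1) (hk1' : 1 ≤ k') (hk' : k' ≤ c.r - 1)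
    (h : (c.cycL i k).toFinset = (c.cycL i' k').toFinset) : i = i' ∧ k = k' := by
  have hr := c.hr
  have hkk : k = k' := by
    have h1 := c.card_cycL (i := i) (k := k) (by omega)
    have h2 := c.card_cycL (i := i') (k := k') (by omega)
    rw [h] at h1; omega
  subst hkk
  refine ⟨?_, rfl⟩
  have hmem : c.cc i' ∈ (c.cycL i k).toFinset := by
    rw [h]; exact c.start_mem hk1
  rw [List.mem_toFinset, mem_cycL] at hmem
  obtain ⟨t, ht, hcc⟩ := hmem
  rcases Nat.eq_zero_or_pos t with rfl | htpos
  · rw [cc_inj, Nat.add_zero, Nat.mod_eq_of_lt hi', Nat.mod_eq_of_lt hi] at hcc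
    omega
  · exfalso
    have hmem2 : c.cc (i' + (c.r - 1)) ∈ (c.cycL i k).toFinset := by
      rw [List.mem_toFinset, mem_cycL]
      refine ⟨t - 1, by omega, ?_⟩
      rw [cc_inj] at hcc ⊢
      have h1 : (i' + (c.r - 1)) % c.r = (i + t + (c.r - 1)) % c.r := by
        rw [Nat.add_mod, hcc, ← Nat.add_mod]
      rw [h1]
      have h2 : i + t + (c.r - 1) = (i + (t - 1)) + c.r := by omega
      rw [h2, Nat.add_mod_right]
    rw [h] at hmem2
    exact c.pred_not_mem hk hmem2

lemma cycL_len_inj {i i' : ℕ} (hi : i < c.r) (hi' : i' < c.r)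
    (h : (c.cycL i (c.len i)).toFinset = (c.cycL i' (c.len i')).toFinset) : i = i' := by
  have hr := c.hr
  have hcard : c.len i = c.len i' := by
    have h1 := c.card_cycL (i := i) (c.len_le i)
    have h2 := c.card_cycL (i := i') (c.len_le i')
    rw [h] at h1; omega
  unfold len at hcard h
  by_cases h0 : i = 0 <;> by_cases h0' : i' = 0
  · omega
  · rw [if_pos h0, if_neg h0'] at hcard; omega
  · rw [if_neg h0, if_pos h0'] at hcard; omega
  · rw [if_neg h0, if_neg h0'] at h
    exact (c.interval_inj hi hi' (by omega) (by omega) (by omega) (by omega) h).1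




def R2 : Finset (Finset (Fin c.n)) :=
  (Finset.range c.r ×ˢ Finset.range (c.r + 1)).image
    (fun p => ((c.cycL p.1 (c.len p.1)).take p.2).toFinset)

lemma R2_subset_powerset : c.R2 ⊆ c.C.powerset := by
  intro Y hY
  rw [R2, Finset.mem_image] at hY
  obtain ⟨p, _, rfl⟩ := hY
  rw [Finset.mem_powerset]
  intro x hx
  rw [List.mem_toFinset] at hx
  exact c.cycL_subset_C (List.mem_of_mem_take hx)

lemma mem_R2 {Y : Finset (Fin c.n)} :
    Y ∈ c.R2 ↔ ∃ i < c.r, ∃ k, Y = ((c.cycL i (c.len i)).take k).toFinset := by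
  rw [R2, Finset.mem_image]
  constructor
  · rintro ⟨p, hp, rfl⟩
    rw [Finset.mem_product, Finset.mem_range, Finset.mem_range] at hp
    exact ⟨p.1, hp.1, p.2, rfl⟩
  · rintro ⟨i, hi, k, rfl⟩
    by_cases hk : k ≤ c.len i
    · refine ⟨(i, k), ?_, rfl⟩
      rw [Finset.mem_product, Finset.mem_range, Finset.mem_range]
      exact ⟨hi, by have := c.len_le i; omega⟩
    · refine ⟨(i, c.len i), ?_, ?_⟩
      · rw [Finset.mem_product, Finset.mem_range, Finset.mem_range]
        exact ⟨hi, by have := c.len_le i; omega⟩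
      · simp only
        rw [List.take_of_length_le (le_of_eq (c.cycL_length i (c.len i))),
          List.take_of_length_le (by rw [c.cycL_length]; omega)]

lemma card_R2_lower : c.r * (c.r - 1) + 2 ≤ c.R2.card := by
  have hr := c.hr
  classical
  set E : Finset (Finset (Fin c.n)) :=
    insert ∅ (insert c.C ((Finset.range c.r ×ˢ Finset.Icc 1 (c.r - 1)).image
      (fun p => (c.cycL p.1 p.2).toFinset))) with hE
  have hsub : E ⊆ c.R2 := by
    intro Y hY
    rw [hE, Finset.mem_insert, Finset.mem_insert] at hY
    rcases hY with rfl | rfl | hY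
    · rw [mem_R2]
      exact ⟨0, by omega, 0, by simp⟩
    · rw [mem_R2]
      refine ⟨0, by omega, c.r, ?_⟩
      rw [show c.len 0 = c.r from if_pos rfl,
        List.take_of_length_le (le_of_eq (c.cycL_length 0 c.r)), C]
    · rw [Finset.mem_image] at hY
      obtain ⟨p, hp, rfl⟩ := hY
      rw [Finset.mem_product, Finset.mem_range, Finset.mem_Icc] at hp
      rw [mem_R2]
      refine ⟨p.1, hp.1, p.2, ?_⟩
      rw [c.cycL_take (le_trans hp.2.2 (c.le_len p.1))]
  have hinj : Set.InjOn (fun p : ℕ × ℕ => (c.cycL p.1 p.2).toFinset)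
      (↑(Finset.range c.r ×ˢ Finset.Icc 1 (c.r - 1)) : Set (ℕ × ℕ)) := by
    intro p hp q hq h
    rw [Finset.mem_coe, Finset.mem_product, Finset.mem_range, Finset.mem_Icc] at hp hq
    have := c.interval_inj hp.1 hq.1 hp.2.1 hp.2.2 hq.2.1 hq.2.2 h
    exact Prod.ext this.1 this.2
  have hcardim : ((Finset.range c.r ×ˢ Finset.Icc 1 (c.r - 1)).image
      (fun p => (c.cycL p.1 p.2).toFinset)).card = c.r * (c.r - 1) := by
    rw [Finset.card_image_of_injOn hinj, Finset.card_product, Finset.card_range,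
      Nat.card_Icc]
    congr 1
  have hCnot : c.C ∉ (Finset.range c.r ×ˢ Finset.Icc 1 (c.r - 1)).image
      (fun p => (c.cycL p.1 p.2).toFinset) := by
    intro h
    rw [Finset.mem_image] at h
    obtain ⟨p, hp, h⟩ := h
    rw [Finset.mem_product, Finset.mem_Icc] at hp
    have h1 : (c.cycL p.1 p.2).toFinset.card = p.2 := c.card_cycL (by omega)
    rw [h, card_C] at h1
    omega
  have hemptynot : (∅ : Finset (Fin c.n)) ∉ insert c.C
      ((Finset.range c.r ×ˢ Finset.Icc 1 (c.r - 1)).image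
      (fun p => (c.cycL p.1 p.2).toFinset)) := by
    rw [Finset.mem_insert]
    rintro (h | h)
    · have := c.card_C; rw [← h] at this; simp at this; omega
    · rw [Finset.mem_image] at h
      obtain ⟨p, hp, h⟩ := h
      rw [Finset.mem_product, Finset.mem_Icc] at hp
      have h1 : (c.cycL p.1 p.2).toFinset.card = p.2 := c.card_cycL (by omega)
      rw [h, Finset.card_empty] at h1; omega
  have hcard : E.card = c.r * (c.r - 1) + 2 := by
    rw [hE, Finset.card_insert_of_notMem hemptynot, Finset.card_insert_of_notMem hCnot,
      hcardim]
  calc c.r * (c.r - 1) + 2 = E.card := hcard.symm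
  _ ≤ c.R2.card := Finset.card_le_card hsub

def TopsDef : Finset (Finset (Fin c.n)) :=
  (c.C.powerset.filter (· ∉ c.R2)).image (insert c.sp)

def TopsL : Finset (Finset (Fin c.n)) :=
  (Finset.range c.r).image (fun i => (c.cycL i (c.len i)).toFinset)

def TopsLP : Finset (Finset (Fin c.n)) :=
  (Finset.range c.r).image (fun i => insert c.sp (c.cycL i (c.len i)).toFinset)

def Tops : Finset (Finset (Fin c.n)) := c.TopsDef ∪ c.TopsL ∪ c.TopsLP

lemma card_TopsDef : c.TopsDef.card + c.R2.card = 2 ^ c.r := by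
  classical
  have hinj : Set.InjOn (insert c.sp)
      (↑(c.C.powerset.filter (· ∉ c.R2)) : Set (Finset (Fin c.n))) := by
    intro Y hY Z hZ h
    simp only [Finset.coe_filter, Set.mem_setOf_eq, Finset.mem_powerset] at hY hZ
    have hsY : c.sp ∉ Y := fun hs => c.sp_not_mem_C (hY.1 hs)
    have hsZ : c.sp ∉ Z := fun hs => c.sp_not_mem_C (hZ.1 hs)
    have := congrArg (Finset.erase · c.sp) h
    simpa [Finset.erase_insert hsY, Finset.erase_insert hsZ] using this
  rw [TopsDef, Finset.card_image_of_injOn hinj]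
  have h2 : c.C.powerset.filter (· ∈ c.R2) = c.R2 := by
    apply Finset.Subset.antisymm
    · intro Y hY; exact (Finset.mem_filter.mp hY).2
    · intro Y hY
      exact Finset.mem_filter.mpr ⟨c.R2_subset_powerset hY, hY⟩
  have h3 := Finset.card_filter_add_card_filter_not
    (s := c.C.powerset) (p := (· ∈ c.R2))
  rw [h2] at h3
  rw [Finset.card_powerset, card_C] at h3
  omega

lemma card_Tops : c.Tops.card + (c.r * (c.r - 1) + 2) ≤ 2 ^ c.r + 2 * c.r := by
  have h1 : c.Tops.card ≤ c.TopsDef.card + c.TopsL.card + c.TopsLP.card := by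
    calc c.Tops.card ≤ (c.TopsDef ∪ c.TopsL).card + c.TopsLP.card := Finset.card_union_le _ _
    _ ≤ c.TopsDef.card + c.TopsL.card + c.TopsLP.card := by
        have := Finset.card_union_le c.TopsDef c.TopsL; omega
  have h2 : c.TopsL.card ≤ c.r := le_trans Finset.card_image_le (by simp)
  have h3 : c.TopsLP.card ≤ c.r := le_trans Finset.card_image_le (by simp)
  have h4 := c.card_TopsDef
  have h5 := c.card_R2_lower
  omega

noncomputable def clist (Y : Finset (Fin c.n)) : List (Fin c.n) :=
  if h : ∃ i, i < c.r ∧ Y = (c.cycL i (c.len i)).toFinset then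
    c.cycL h.choose (c.len h.choose)
  else if h2 : ∃ i, i < c.r ∧ Y = insert c.sp (c.cycL i (c.len i)).toFinset then
    c.sp :: c.cycL h2.choose (c.len h2.choose)
  else (Y.erase c.sp).sort (· ≤ ·) ++ [c.sp]

lemma clist_long {i : ℕ} (hi : i < c.r) :
    c.clist (c.cycL i (c.len i)).toFinset = c.cycL i (c.len i) := by
  rw [clist]
  have h : ∃ j, j < c.r ∧ (c.cycL i (c.len i)).toFinset = (c.cycL j (c.len j)).toFinset :=
    ⟨i, hi, rfl⟩
  rw [dif_pos h]
  obtain ⟨hj, hY⟩ := h.choose_spec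
  have hji : h.choose = i := c.cycL_len_inj hj hi hY.symm
  rw [hji]

lemma clist_longP {i : ℕ} (hi : i < c.r) :
    c.clist (insert c.sp (c.cycL i (c.len i)).toFinset) = c.sp :: c.cycL i (c.len i) := by
  rw [clist]
  have h1 : ¬ ∃ j, j < c.r ∧
      insert c.sp (c.cycL i (c.len i)).toFinset = (c.cycL j (c.len j)).toFinset := by
    rintro ⟨j, hj, hY⟩
    have : c.sp ∈ (c.cycL j (c.len j)).toFinset := hY ▸ Finset.mem_insert_self _ _
    rw [List.mem_toFinset] at this
    exact c.sp_not_mem_cycL this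
  rw [dif_neg h1]
  have h2 : ∃ j, j < c.r ∧ insert c.sp (c.cycL i (c.len i)).toFinset
      = insert c.sp (c.cycL j (c.len j)).toFinset := ⟨i, hi, rfl⟩
  rw [dif_pos h2]
  obtain ⟨hj, hY⟩ := h2.choose_spec
  have hY' : (c.cycL i (c.len i)).toFinset = (c.cycL h2.choose (c.len h2.choose)).toFinset := by
    have e1 : c.sp ∉ (c.cycL i (c.len i)).toFinset := by
      rw [List.mem_toFinset]; exact c.sp_not_mem_cycL
    have e2 : c.sp ∉ (c.cycL h2.choose (c.len h2.choose)).toFinset := by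
      rw [List.mem_toFinset]; exact c.sp_not_mem_cycL
    have := congrArg (Finset.erase · c.sp) hY
    simpa [Finset.erase_insert e1, Finset.erase_insert e2] using this
  have hji : h2.choose = i := c.cycL_len_inj hj hi hY'.symm
  rw [hji]

lemma clist_def {Y : Finset (Fin c.n)} (hYC : Y ⊆ c.C) (hY : Y ∉ c.R2) :
    c.clist (insert c.sp Y) = Y.sort (· ≤ ·) ++ [c.sp] := by
  rw [clist]
  have hsY : c.sp ∉ Y := fun hs => c.sp_not_mem_C (hYC hs)
  have h1 : ¬ ∃ j, j < c.r ∧ insert c.sp Y = (c.cycL j (c.len j)).toFinset := by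
    rintro ⟨j, hj, hY'⟩
    have : c.sp ∈ (c.cycL j (c.len j)).toFinset := hY' ▸ Finset.mem_insert_self _ _
    rw [List.mem_toFinset] at this
    exact c.sp_not_mem_cycL this
  rw [dif_neg h1]
  have h2 : ¬ ∃ j, j < c.r ∧ insert c.sp Y = insert c.sp (c.cycL j (c.len j)).toFinset := by
    rintro ⟨j, hj, hY'⟩
    have e2 : c.sp ∉ (c.cycL j (c.len j)).toFinset := by
      rw [List.mem_toFinset]; exact c.sp_not_mem_cycL
    have hYY : Y = (c.cycL j (c.len j)).toFinset := by
      have := congrArg (Finset.erase · c.sp) hY'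
      simpa [Finset.erase_insert hsY, Finset.erase_insert e2] using this
    apply hY
    rw [mem_R2]
    exact ⟨j, hj, c.len j, by rw [List.take_of_length_le (by rw [cycL_length])]; exact hYY⟩
  rw [dif_neg h2]
  rw [Finset.erase_insert hsY]



lemma hm : c.m = c.r + 1 := by have := c.h4; unfold r; omega

lemma sp_val : c.sp.val = c.r := rfl

lemma Tops_spec {Y : Finset (Fin c.n)} (hY : Y ∈ c.Tops) :
    (c.clist Y).Nodup ∧ (c.clist Y).toFinset = Y ∧ (∀ x ∈ Y, x.val < c.m) ∧ Y.Nonempty := by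
  have hmr := c.hm
  have hr := c.hr
  rw [Tops, Finset.mem_union, Finset.mem_union] at hY
  rcases hY with (hY | hY) | hY
  · rw [TopsDef, Finset.mem_image] at hY
    obtain ⟨Y₀, hY₀, rfl⟩ := hY
    rw [Finset.mem_filter, Finset.mem_powerset] at hY₀
    obtain ⟨hY₀C, hY₀R⟩ := hY₀
    rw [c.clist_def hY₀C hY₀R]
    have hs : c.sp ∉ Y₀ := fun h => c.sp_not_mem_C (hY₀C h)
    refine ⟨?_, ?_, ?_, ⟨c.sp, Finset.mem_insert_self _ _⟩⟩
    · rw [List.nodup_append]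
      refine ⟨Finset.sort_nodup _ _, List.nodup_singleton _, ?_⟩
      intro x hx y hx2 hxy; subst hxy
      rw [Finset.mem_sort] at hx
      rw [List.mem_singleton] at hx2
      exact hs (hx2 ▸ hx)
    · rw [List.toFinset_append, Finset.sort_toFinset]
      simp only [List.toFinset_cons, List.toFinset_nil, LawfulSingleton.insert_empty_eq]
      rw [Finset.union_comm, ← Finset.insert_eq]
    · intro x hx
      rcases Finset.mem_insert.mp hx with rfl | hx
      · rw [sp_val]; omega
      · have := (c.mem_C).mp (hY₀C hx); omega
  · rw [TopsL, Finset.mem_image] at hY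
    obtain ⟨i, hi, rfl⟩ := hY
    rw [Finset.mem_range] at hi
    rw [c.clist_long hi]
    have h1 : 1 ≤ c.len i := by have := c.le_len i; omega
    refine ⟨c.nodup_cycL (c.len_le i), rfl, ?_, ⟨c.cc i, c.start_mem h1⟩⟩
    intro x hx
    have := c.mem_C.mp (c.cycL_subset_C (List.mem_toFinset.mp hx))
    omega
  · rw [TopsLP, Finset.mem_image] at hY
    obtain ⟨i, hi, rfl⟩ := hY
    rw [Finset.mem_range] at hi
    rw [c.clist_longP hi]
    have h1 : 1 ≤ c.len i := by have := c.le_len i; omega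
    refine ⟨?_, ?_, ?_, ⟨c.sp, Finset.mem_insert_self _ _⟩⟩
    · rw [List.nodup_cons]
      exact ⟨c.sp_not_mem_cycL, c.nodup_cycL (c.len_le i)⟩
    · rw [List.toFinset_cons]
    · intro x hx
      rcases Finset.mem_insert.mp hx with rfl | hx
      · rw [sp_val]; omega
      · have := c.mem_C.mp (c.cycL_subset_C (List.mem_toFinset.mp hx))
        omega

lemma take_cycL_norm (i k : ℕ) :
    (c.cycL i (c.len i)).take k = c.cycL i (min k (c.len i)) := by
  rcases le_total k (c.len i) with h | h
  · rw [min_eq_left h, c.cycL_take h]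
  · rw [min_eq_right h, List.take_of_length_le (by rw [cycL_length]; exact h)]

lemma coverage {Y' : Finset (Fin c.n)} (hY' : ∀ x ∈ Y', x.val < c.m) :
    ∃ Y ∈ c.Tops, ∃ k, k ≤ (c.clist Y).length ∧ ((c.clist Y).take k).toFinset = Y' := by
  classical
  have hmr := c.hm
  set Y'' := Y'.erase c.sp with hY''def
  have hsY'' : c.sp ∉ Y'' := Finset.notMem_erase _ _
  have hY''C : Y'' ⊆ c.C := by
    intro x hx
    obtain ⟨hxs, hxY⟩ := Finset.mem_erase.mp hx
    rw [mem_C]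
    have h1 := hY' x hxY
    have h2 : x.val ≠ c.r := fun h => hxs (Fin.ext (h.trans c.sp_val.symm))
    omega
  by_cases hR : Y'' ∈ c.R2
  · rw [mem_R2] at hR
    obtain ⟨i, hi, k, hk⟩ := hR
    rw [c.take_cycL_norm] at hk
    set k₀ := min k (c.len i) with hk₀
    have hk₀le : k₀ ≤ c.len i := min_le_right _ _
    by_cases hsp : c.sp ∈ Y'
    · refine ⟨insert c.sp (c.cycL i (c.len i)).toFinset, ?_, k₀ + 1, ?_, ?_⟩
      · rw [Tops, Finset.mem_union]
        exact Or.inr (Finset.mem_image.mpr ⟨i, Finset.mem_range.mpr hi, rfl⟩)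
      · rw [c.clist_longP hi, List.length_cons, cycL_length]
        omega
      · rw [c.clist_longP hi, List.take_succ_cons, List.toFinset_cons,
          c.cycL_take hk₀le, ← hk, hY''def, Finset.insert_erase hsp]
    · refine ⟨(c.cycL i (c.len i)).toFinset, ?_, k₀, ?_, ?_⟩
      · rw [Tops, Finset.mem_union]
        refine Or.inl (Finset.mem_union.mpr (Or.inr ?_))
        rw [TopsL, Finset.mem_image]
        exact ⟨i, Finset.mem_range.mpr hi, rfl⟩
      · rw [c.clist_long hi, cycL_length]; exact hk₀le
      · rw [c.clist_long hi, c.cycL_take hk₀le, ← hk, hY''def,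
          Finset.erase_eq_self.mpr hsp]
  · have hYT : insert c.sp Y'' ∈ c.Tops := by
      rw [Tops, Finset.mem_union]
      refine Or.inl (Finset.mem_union.mpr (Or.inl ?_))
      rw [TopsDef, Finset.mem_image]
      exact ⟨Y'', Finset.mem_filter.mpr ⟨Finset.mem_powerset.mpr hY''C, hR⟩, rfl⟩
    have hcl := c.clist_def hY''C hR
    have hlen : (c.clist (insert c.sp Y'')).length = Y''.card + 1 := by
      rw [hcl, List.length_append, Finset.length_sort, List.length_singleton]
    by_cases hsp : c.sp ∈ Y'
    · refine ⟨insert c.sp Y'', hYT, Y''.card + 1, le_of_eq hlen.symm, ?_⟩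
      rw [hcl, List.take_of_length_le
        (by rw [List.length_append, Finset.length_sort, List.length_singleton]),
        List.toFinset_append, Finset.sort_toFinset]
      simp only [List.toFinset_cons, List.toFinset_nil, LawfulSingleton.insert_empty_eq]
      rw [Finset.union_comm, ← Finset.insert_eq, hY''def, Finset.insert_erase hsp]
    · refine ⟨insert c.sp Y'', hYT, Y''.card, by omega, ?_⟩
      rw [hcl, List.take_left' (Finset.length_sort _), Finset.sort_toFinset,
        hY''def, Finset.erase_eq_self.mpr hsp]


def AV : Finset (Fin c.n → Bool) :=
  (Finset.univ : Finset (Fin (c.n - c.m) → Bool)).image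
    (fun g i => if h : c.m ≤ i.val then g ⟨i.val - c.m, by have := i.isLt; omega⟩ else false)

lemma mem_AV {x : Fin c.n → Bool} :
    x ∈ c.AV ↔ ∀ i : Fin c.n, i.val < c.m → x i = false := by
  rw [AV, Finset.mem_image]
  constructor
  · rintro ⟨g, -, rfl⟩ i hi
    exact dif_neg (by omega)
  · intro h
    refine ⟨fun j => x ⟨c.m + j.val, by have := j.isLt; have := c.hmn; omega⟩,
      Finset.mem_univ _, ?_⟩
    funext i
    by_cases hi : c.m ≤ i.val
    · rw [dif_pos hi]
      show x ⟨c.m + (i.val - c.m), by have := i.isLt; omega⟩ = x i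
      have hFin : (⟨c.m + (i.val - c.m),
          (by have := i.isLt; omega : c.m + (i.val - c.m) < c.n)⟩ : Fin c.n) = i := by
        rw [Fin.ext_iff]
        show c.m + (i.val - c.m) = i.val
        omega
      exact congrArg x hFin
    · rw [dif_neg hi]
      exact (h i (by omega)).symm

lemma card_AV : c.AV.card ≤ 2 ^ (c.n - c.m) := by
  calc c.AV.card ≤ (Finset.univ : Finset (Fin (c.n - c.m) → Bool)).card :=
        Finset.card_image_le
  _ = 2 ^ (c.n - c.m) := by
      rw [Finset.card_univ]
      simp

def topVtx (Y : Finset (Fin c.n)) : Fin c.n → Bool := fun i => decide (i ∈ Y)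

def BV : Finset (Fin c.n → Bool) := c.Tops.image c.topVtx

def SV : Finset (Fin c.n → Bool) := c.AV ∪ c.BV

def suppF (x : Fin c.n → Bool) : Finset (Fin c.n) :=
  Finset.univ.filter (fun i => x i = true)

lemma mem_suppF {x : Fin c.n → Bool} {i : Fin c.n} : i ∈ c.suppF x ↔ x i = true := by
  simp [suppF]

lemma suppF_topVtx (Y : Finset (Fin c.n)) : c.suppF (c.topVtx Y) = Y := by
  ext i
  simp [suppF, topVtx]

lemma suppF_mem_Tops {v : Fin c.n → Bool} (hv : v ∈ c.BV) : c.suppF v ∈ c.Tops := by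
  obtain ⟨Y, hY, rfl⟩ := Finset.mem_image.mp hv
  rwa [c.suppF_topVtx]

lemma BV_not_AV {v : Fin c.n → Bool} (hv : v ∈ c.BV) : v ∉ c.AV := by
  obtain ⟨Y, hY, rfl⟩ := Finset.mem_image.mp hv
  obtain ⟨-, -, hcube, hne⟩ := c.Tops_spec hY
  obtain ⟨x, hx⟩ := hne
  intro hA
  have h1 := (c.mem_AV.mp hA) x (hcube x hx)
  rw [topVtx] at h1
  simp [hx] at h1

def diffL (u v : Fin c.n → Bool) : List (Fin c.n) :=
  (Finset.univ.filter (fun i => u i ≠ v i)).sort (· ≤ ·)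

noncomputable def spL (u v : Fin c.n → Bool) : List (Fin c.n) :=
  c.clist (c.suppF v) ++ (c.suppF u).sort (· ≤ ·)

lemma spL_nodup {u v : Fin c.n → Bool} (hu : u ∈ c.AV) (hv : v ∈ c.BV) :
    (c.spL u v).Nodup := by
  obtain ⟨hnd, htf, hcube, -⟩ := c.Tops_spec (c.suppF_mem_Tops hv)
  rw [spL, List.nodup_append]
  refine ⟨hnd, Finset.sort_nodup _ _, ?_⟩
  intro x hx y hx2 hxy; subst hxy
  have hxY : x ∈ c.suppF v := htf ▸ List.mem_toFinset.mpr hx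
  have h1 : x.val < c.m := hcube x hxY
  rw [Finset.mem_sort, c.mem_suppF] at hx2
  rw [c.mem_AV.mp hu x h1] at hx2
  exact Bool.false_ne_true hx2

lemma spL_apply {u v : Fin c.n → Bool} (hu : u ∈ c.AV) (hv : v ∈ c.BV) :
    applyList u (c.spL u v) = v := by
  obtain ⟨hnd, htf, hcube, -⟩ := c.Tops_spec (c.suppF_mem_Tops hv)
  funext i
  rw [applyList_apply (c.spL_nodup hu hv)]
  have hmem : i ∈ c.spL u v ↔ (i ∈ c.suppF v ∨ i ∈ c.suppF u) := by
    have h1 : i ∈ c.clist (c.suppF v) ↔ i ∈ c.suppF v := by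
      rw [← List.mem_toFinset, htf]
    rw [spL, List.mem_append, Finset.mem_sort, h1]
  by_cases hiv : i ∈ c.suppF v
  · rw [if_pos (hmem.mpr (Or.inl hiv))]
    have h1 : u i = false := c.mem_AV.mp hu i (hcube i hiv)
    have h2 : v i = true := c.mem_suppF.mp hiv
    rw [h1, h2]
    rfl
  · have h2 : v i = false := by
      rcases Bool.eq_false_or_eq_true (v i) with h | h
      · exact absurd (c.mem_suppF.mpr h) hiv
      · exact h
    by_cases hiu : i ∈ c.suppF u
    · rw [if_pos (hmem.mpr (Or.inr hiu))]
      rw [c.mem_suppF.mp hiu, h2]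
      rfl
    · rw [if_neg (fun h => by rcases hmem.mp h with h | h <;> [exact hiv h; exact hiu h])]
      rw [h2]
      rcases Bool.eq_false_or_eq_true (u i) with h | h
      · exact absurd (c.mem_suppF.mpr h) hiu
      · exact h

lemma diffL_nodup (u v : Fin c.n → Bool) : (c.diffL u v).Nodup :=
  Finset.sort_nodup _ _

lemma mem_diffL {u v : Fin c.n → Bool} {i : Fin c.n} :
    i ∈ c.diffL u v ↔ u i ≠ v i := by
  unfold diffL
  rw [Finset.mem_sort, Finset.mem_filter]
  simp

lemma diffL_apply (u v : Fin c.n → Bool) : applyList u (c.diffL u v) = v := by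
  funext i
  rw [applyList_apply (c.diffL_nodup u v)]
  by_cases h : u i = v i
  · rw [if_neg (fun hh => (c.mem_diffL.mp hh) h), h]
  · rw [if_pos (c.mem_diffL.mpr h)]
    revert h
    cases u i <;> cases v i <;> simp

noncomputable def pairL (u v : Fin c.n → Bool) : List (Fin c.n) :=
  if u ∈ c.AV ∧ v ∈ c.BV then c.spL u v
  else if v ∈ c.AV ∧ u ∈ c.BV then (c.spL v u).reverse
  else c.diffL u v

lemma applyList_rev {L : List (Fin c.n)} (hL : L.Nodup) {u v : Fin c.n → Bool}
    (h : applyList u L = v) : applyList v L.reverse = u := by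
  subst h
  funext i
  rw [applyList_apply (List.nodup_reverse.mpr hL)]
  simp only [List.mem_reverse]
  by_cases hi : i ∈ L
  · rw [if_pos hi, applyList_apply hL, if_pos hi, Bool.not_not]
  · rw [if_neg hi, applyList_apply hL, if_neg hi]

lemma pairL_nodup (u v : Fin c.n → Bool) : (c.pairL u v).Nodup := by
  rw [pairL]
  split_ifs with h1 h2
  · exact c.spL_nodup h1.1 h1.2
  · exact List.nodup_reverse.mpr (c.spL_nodup h2.1 h2.2)
  · exact Finset.sort_nodup _ _

lemma pairL_apply (u v : Fin c.n → Bool) : applyList u (c.pairL u v) = v := by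
  rw [pairL]
  split_ifs with h1 h2
  · exact c.spL_apply h1.1 h1.2
  · exact c.applyList_rev (c.spL_nodup h2.1 h2.2) (c.spL_apply h2.1 h2.2)
  · exact c.diffL_apply u v

lemma take_rev {L : List (Fin c.n)} (hL : L.Nodup) {u v : Fin c.n → Bool}
    (h : applyList u L = v) (k : ℕ) :
    applyList v (L.reverse.take (L.length - k)) = applyList u (L.take k) := by
  have hrev : L.reverse.take (L.length - k) = (L.drop k).reverse := by
    have h1 : L.reverse = (L.drop k).reverse ++ (L.take k).reverse := by
      rw [← List.reverse_append, List.take_append_drop]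
    rw [h1, List.take_left' (by simp)]
  rw [hrev]
  subst h
  funext i
  have hnd1 : (L.drop k).reverse.Nodup :=
    List.nodup_reverse.mpr (hL.sublist (List.drop_sublist _ _))
  have hnd2 : (L.take k).Nodup := hL.sublist (List.take_sublist _ _)
  have hdisj : ∀ x, x ∈ L.take k → x ∈ L.drop k → False := by
    have := hL
    rw [← List.take_append_drop k L, List.nodup_append] at this
    exact fun x hx hx2 => this.2.2 x hx x hx2 rfl
  rw [applyList_apply hnd1, applyList_apply hnd2]
  simp only [List.mem_reverse]
  by_cases hd : i ∈ L.drop k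
  · have hiL : i ∈ L := by
      rw [← List.take_append_drop k L, List.mem_append]
      exact Or.inr hd
    rw [if_pos hd, applyList_apply hL, if_pos hiL, Bool.not_not,
      if_neg (fun ht => hdisj i ht hd)]
  · rw [if_neg hd, applyList_apply hL]
    by_cases ht : i ∈ L.take k
    · have hiL : i ∈ L := by
        rw [← List.take_append_drop k L, List.mem_append]
        exact Or.inl ht
      rw [if_pos hiL, if_pos ht]
    · have hiL : i ∉ L := by
        rw [← List.take_append_drop k L, List.mem_append]
        rintro (h | h) <;> [exact ht h; exact hd h]
      rw [if_neg hiL, if_neg ht]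

noncomputable def geo (u v : Fin c.n → Bool) : (hypercube c.n).Walk u v :=
  (walkOfList u (c.pairL u v)).copy rfl (c.pairL_apply u v)

lemma geo_length (u v : Fin c.n → Bool) :
    (c.geo u v).length = (hypercube c.n).dist u v := by
  have h1 : (c.geo u v).length = (c.pairL u v).length := by
    rw [geo, SimpleGraph.Walk.length_copy, walkOfList_length]
  have h2 : hammingDist u v = (c.pairL u v).length := by
    conv_lhs => rw [← c.pairL_apply u v]
    rw [hamming_applyList (c.pairL_nodup u v)]
  rw [dist_eq_hamming (c.geo u v) (by rw [h1]; exact h2.symm), h1]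
  exact h2.symm

noncomputable def ee : (Fin c.n → Bool) ≃ Fin (Fintype.card (Fin c.n → Bool)) :=
  Fintype.equivFin _

noncomputable def gam (u v : Fin c.n → Bool) : (hypercube c.n).Walk u v :=
  if c.ee u ≤ c.ee v then c.geo u v else (c.geo v u).reverse

lemma gam_length (u v : Fin c.n → Bool) :
    (c.gam u v).length = (hypercube c.n).dist u v := by
  rw [gam]
  split_ifs with h
  · exact c.geo_length u v
  · rw [SimpleGraph.Walk.length_reverse, c.geo_length, SimpleGraph.dist_comm]

lemma gam_symm (u v : Fin c.n → Bool) : c.gam u v = (c.gam v u).reverse := by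
  rcases eq_or_ne u v with rfl | hne
  · have h0 : (c.gam u u).length = 0 := by
      rw [c.gam_length]
      exact SimpleGraph.dist_self
    have h1 : c.gam u u = SimpleGraph.Walk.nil := (SimpleGraph.Walk.length_eq_zero_iff.mp h0).eq_nil
    rw [h1]
    rfl
  · rcases le_total (c.ee u) (c.ee v) with h | h
    · rw [gam, gam, if_pos h,
        if_neg (fun h' => hne (c.ee.injective (le_antisymm h h'))),
        SimpleGraph.Walk.reverse_reverse]
    · rw [gam, gam, if_pos h,
        if_neg (fun h' => hne (c.ee.injective (le_antisymm h' h)))]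

lemma gam_cover (z : Fin c.n → Bool) :
    ∃ u, ∃ _ : u ∈ c.SV, ∃ v, ∃ _ : v ∈ c.SV, z ∈ (c.gam u v).support := by
  classical
  set uu : Fin c.n → Bool := fun i => decide (c.m ≤ i.val) && z i with huu
  have huA : uu ∈ c.AV := by
    rw [mem_AV]
    intro i hi
    show (decide (c.m ≤ i.val) && z i) = false
    rw [decide_eq_false (by omega), Bool.false_and]
  set Y' := Finset.univ.filter (fun i : Fin c.n => i.val < c.m ∧ z i = true) with hY'
  have hY'cube : ∀ x ∈ Y', x.val < c.m := fun x hx => (Finset.mem_filter.mp hx).2.1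
  obtain ⟨Y, hY, k, hkle, hktf⟩ := c.coverage hY'cube
  set vv := c.topVtx Y with hvv
  have hvB : vv ∈ c.BV := Finset.mem_image_of_mem _ hY
  obtain ⟨hnd, htf, hcube, -⟩ := c.Tops_spec hY
  have hsup : c.suppF vv = Y := c.suppF_topVtx Y
  have huSV : uu ∈ c.SV := Finset.mem_union.mpr (Or.inl huA)
  have hvSV : vv ∈ c.SV := Finset.mem_union.mpr (Or.inr hvB)
  have hz : z = applyList uu ((c.spL uu vv).take k) := by
    have htk : (c.spL uu vv).take k = (c.clist Y).take k := by
      rw [spL, hsup, List.take_append_of_le_length hkle]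
    rw [htk]
    funext i
    have hnd' : ((c.clist Y).take k).Nodup := hnd.sublist (List.take_sublist _ _)
    rw [applyList_apply hnd']
    have hmem : i ∈ (c.clist Y).take k ↔ i ∈ Y' := by
      rw [← List.mem_toFinset, hktf]
    by_cases hiY : i ∈ Y'
    · rw [if_pos (hmem.mpr hiY)]
      have h2 : i.val < c.m ∧ z i = true := (Finset.mem_filter.mp hiY).2
      have h1 : uu i = false := by
        show (decide (c.m ≤ i.val) && z i) = false
        rw [decide_eq_false (by omega), Bool.false_and]
      rw [h2.2, h1]
      rfl
    · rw [if_neg (fun h => hiY (hmem.mp h))]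
      by_cases hvm : i.val < c.m
      · have hz0 : z i = false := by
          rcases Bool.eq_false_or_eq_true (z i) with h | h
          · exact absurd (Finset.mem_filter.mpr ⟨Finset.mem_univ _, hvm, h⟩) hiY
          · exact h
        have h1 : uu i = false := by
          show (decide (c.m ≤ i.val) && z i) = false
          rw [decide_eq_false (by omega), Bool.false_and]
        rw [hz0, h1]
      · show z i = (decide (c.m ≤ i.val) && z i)
        rw [show (decide (c.m ≤ i.val)) = true from decide_eq_true (by omega),
          Bool.true_and]
  have hkle2 : k ≤ (c.spL uu vv).length := by
    rw [spL, hsup, List.length_append]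
    omega
  rcases le_total (c.ee uu) (c.ee vv) with h | h
  · refine ⟨uu, huSV, vv, hvSV, ?_⟩
    rw [gam, if_pos h, geo, SimpleGraph.Walk.support_copy, mem_support_walkOfList]
    refine ⟨k, ?_⟩
    rw [pairL, if_pos ⟨huA, hvB⟩]
    exact hz
  · refine ⟨vv, hvSV, uu, huSV, ?_⟩
    rw [gam, if_pos h, geo, SimpleGraph.Walk.support_copy, mem_support_walkOfList]
    have hP : c.pairL vv uu = (c.spL uu vv).reverse := by
      rw [pairL, if_neg (fun hh => (c.BV_not_AV hvB) hh.1), if_pos ⟨huA, hvB⟩]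
    refine ⟨(c.spL uu vv).length - k, ?_⟩
    rw [hP]
    rw [c.take_rev (c.spL_nodup huA hvB) (c.spL_apply huA hvB) k]
    exact hz

lemma isSGS : IsStrongGeodeticSet (hypercube c.n) ↑c.SV := by
  refine ⟨fun u _ v _ => c.gam u v, fun u _ v _ => c.gam_length u v,
    fun u _ v _ => c.gam_symm u v, ?_⟩
  intro z
  obtain ⟨u, hu, v, hv, hz⟩ := c.gam_cover z
  exact ⟨u, hu, v, hv, hz⟩

lemma card_SV_bound :
    c.SV.card + (c.r * (c.r - 1) + 2) ≤ 2 ^ (c.n - c.m) + 2 ^ c.r + 2 * c.r := by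
  have h1 : c.SV.card ≤ c.AV.card + c.BV.card := Finset.card_union_le _ _
  have h2 : c.BV.card ≤ c.Tops.card := Finset.card_image_le
  have h3 := c.card_AV
  have h4 := c.card_Tops
  omega

end Ctx


end StrongGeodeticDevelopment

/-- Main step of Theorem 4.3: for `n ≥ n₀ ≥ 4`,
`sg(Qₙ) ≤ 2^(n - n₀) + 2^(n₀ - 1) - (n₀ - 2)(n₀ - 3)`. -/
theorem sg_hypercube_upper2_split (n n₀ : ℕ) (h4 : 4 ≤ n₀) (hn : n₀ ≤ n) :
    (strongGeodeticNumber (hypercube n) : ℤ) ≤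
      2 ^ (n - n₀) + 2 ^ (n₀ - 1) - ((n₀ : ℤ) - 2) * ((n₀ : ℤ) - 3) := by
  set c : Ctx := ⟨n, n₀, h4, hn⟩ with hc
  have hsg : strongGeodeticNumber (hypercube n) ≤ c.SV.card :=
    Nat.sInf_le ⟨c.SV, rfl, c.isSGS⟩
  have hb := c.card_SV_bound
  have hr : c.r = n₀ - 1 := rfl
  have hm : c.m = n₀ := rfl
  have hnm : c.n - c.m = n - n₀ := rfl
  rw [hr, hm, hnm] at hb
  have hcast : ((n₀ - 1 : ℕ) : ℤ) = (n₀ : ℤ) - 1 := by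
    have : (1 : ℕ) ≤ n₀ := by omega
    push_cast [this]
    ring
  have hb' : (c.SV.card : ℤ) + (((n₀ : ℤ) - 1) * (((n₀ : ℤ) - 1) - 1) + 2) ≤
      2 ^ (n - n₀) + 2 ^ (n₀ - 1) + 2 * ((n₀ : ℤ) - 1) := by
    have h5 : ((n₀ - 1 : ℕ) - 1 : ℕ) = n₀ - 2 := by omega
    have hcast2 : ((n₀ - 2 : ℕ) : ℤ) = (n₀ : ℤ) - 2 := by
      have : (2 : ℕ) ≤ n₀ := by omega
      push_cast [this]
      ring
    have := hb
    zify at this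
    calc (c.SV.card : ℤ) + (((n₀ : ℤ) - 1) * (((n₀ : ℤ) - 1) - 1) + 2)
        = (c.SV.card : ℤ) + (((n₀ - 1 : ℕ) : ℤ) * ((n₀ - 2 : ℕ) : ℤ) + 2) := by
          rw [hcast, hcast2]; ring
    _ ≤ 2 ^ (n - n₀) + 2 ^ (n₀ - 1) + 2 * ((n₀ : ℤ) - 1) := by
          rw [← hcast]
          push_cast at this ⊢
          nlinarith [this]
  have hfin : (c.SV.card : ℤ) ≤
      2 ^ (n - n₀) + 2 ^ (n₀ - 1) - ((n₀ : ℤ) - 2) * ((n₀ : ℤ) - 3) := by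
    nlinarith [hb']
  calc (strongGeodeticNumber (hypercube n) : ℤ) ≤ (c.SV.card : ℤ) := by
        exact_mod_cast hsg
  _ ≤ _ := hfin
end
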